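/- Let b > 0 and d, n positive integers with bd < 1. Let θ ∈ ℝⁿ and M an n×n symmetric matrix with M_{i,i} = 0 for all i, |M_{i,j}| ≤ b for all i, j, and each row of M having at most d nonzero entries. Let S ⊆ [n], x ∈ {−1,1}ⁿ, and v ≠ u with v, u ∉ S. Let ℓ ≥ 1 and suppose that every path from v to u in the graph with adjacency matrix M whose intermediate vertices all lie outside S has length at least ℓ. Then for X ∼ I_{(M,θ)}, |P[X_v = 1 | X_S = x_S, X_u = 1] − P[X_v = 1 | X_S = x_S, X_u = −1]| ≤ (bd)^ℓ/(1 − bd). -/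

import Mathlib

open Finset Real
open scoped Classical

noncomputable section

/-- The real spin value (`±1`) of a Boolean configuration entry. -/
def spin (s : Bool) : ℝ := if s then 1 else -1

/-- The unnormalized Ising weight `exp(θ·x + ½ x·Mx)` of a configuration. -/
def isingWt {n : ℕ} (M : Matrix (Fin n) (Fin n) ℝ) (θ : Fin n → ℝ) (σ : Fin n → Bool) : ℝ :=
  Real.exp ((∑ i, θ i * spin (σ i)) + (1 / 2) * ∑ i, ∑ j, spin (σ i) * M i j * spin (σ j))

/-- The Ising probability of a single configuration. -/
def isingProb {n : ℕ} (M : Matrix (Fin n) (Fin n) ℝ) (θ : Fin n → ℝ) (σ : Fin n → Bool) : ℝ :=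
  isingWt M θ σ / ∑ τ : Fin n → Bool, isingWt M θ τ

/-- The Ising probability of an event `A`. -/
def isingPr {n : ℕ} (M : Matrix (Fin n) (Fin n) ℝ) (θ : Fin n → ℝ)
    (A : (Fin n → Bool) → Prop) : ℝ :=
  ∑ σ ∈ Finset.univ.filter (fun σ => A σ), isingProb M θ σ

/-- The Ising conditional probability `P[A | B]`. -/
def isingCond {n : ℕ} (M : Matrix (Fin n) (Fin n) ℝ) (θ : Fin n → ℝ)
    (A B : (Fin n → Bool) → Prop) : ℝ :=
  isingPr M θ (fun σ => A σ ∧ B σ) / isingPr M θ B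

lemma spin_true : spin true = 1 := rfl
lemma spin_false : spin false = -1 := rfl

/-- local field at site `i` (includes the `j = i` term, which vanishes when `M i i = 0`). -/
def hfield {n : ℕ} (M : Matrix (Fin n) (Fin n) ℝ) (θ : Fin n → ℝ) (i : Fin n)
    (σ : Fin n → Bool) : ℝ := θ i + ∑ j, M i j * spin (σ j)

lemma hfield_update {n : ℕ} (M : Matrix (Fin n) (Fin n) ℝ) (θ : Fin n → ℝ)
    (hdiag : ∀ i, M i i = 0) (i : Fin n) (σ : Fin n → Bool) (a : Bool) :
    hfield M θ i (Function.update σ i a) = hfield M θ i σ := by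
  unfold hfield
  congr 1
  refine Finset.sum_congr rfl fun j _ => ?_
  rcases eq_or_ne j i with rfl | hj
  · simp [hdiag]
  · simp [Function.update_of_ne hj]

lemma isingWt_update {n : ℕ} (M : Matrix (Fin n) (Fin n) ℝ) (θ : Fin n → ℝ)
    (hsymm : M.IsSymm) (hdiag : ∀ i, M i i = 0) (i : Fin n) (σ : Fin n → Bool) :
    isingWt M θ (Function.update σ i true)
      = Real.exp (2 * hfield M θ i σ) * isingWt M θ (Function.update σ i false) := by
  have key : ∀ a : Bool,
      ((∑ k, θ k * spin (Function.update σ i a k)) + (1 / 2) *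
        ∑ k, ∑ j, spin (Function.update σ i a k) * M k j * spin (Function.update σ i a j))
      = ((∑ k ∈ Finset.univ.erase i, θ k * spin (σ k)) + (1 / 2) *
        ∑ k ∈ Finset.univ.erase i, ∑ j ∈ Finset.univ.erase i,
          spin (σ k) * M k j * spin (σ j))
        + spin a * hfield M θ i σ := by
    intro a
    have hs : ∀ j k : Fin n, M j k = M k j := fun j k => by
      have := congrFun (congrFun hsymm k) j
      simpa [Matrix.transpose_apply] using this
    have e1 : (∑ k, θ k * spin (Function.update σ i a k))
        = (∑ k ∈ Finset.univ.erase i, θ k * spin (σ k)) + θ i * spin a := by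
      rw [← Finset.sum_erase_add _ _ (Finset.mem_univ i)]
      congr 1
      · refine Finset.sum_congr rfl fun k hk => ?_
        rw [Function.update_of_ne (Finset.ne_of_mem_erase hk)]
      · simp
    have e2 : (∑ k, ∑ j, spin (Function.update σ i a k) * M k j * spin (Function.update σ i a j))
        = (∑ k ∈ Finset.univ.erase i, ∑ j ∈ Finset.univ.erase i,
            spin (σ k) * M k j * spin (σ j))
          + 2 * spin a * (∑ j, M i j * spin (σ j)) := by
      have upd_ne : ∀ k ∈ Finset.univ.erase i,
          spin (Function.update σ i a k) = spin (σ k) := fun k hk => by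
        rw [Function.update_of_ne (Finset.ne_of_mem_erase hk)]
      rw [← Finset.sum_erase_add _ _ (Finset.mem_univ i)]
      have inner : ∀ k ∈ Finset.univ.erase i,
          (∑ j, spin (Function.update σ i a k) * M k j * spin (Function.update σ i a j))
          = (∑ j ∈ Finset.univ.erase i, spin (σ k) * M k j * spin (σ j))
            + spin (σ k) * M k i * spin a := by
        intro k hk
        rw [← Finset.sum_erase_add _ _ (Finset.mem_univ i)]
        congr 1
        · refine Finset.sum_congr rfl fun j hj => ?_
          rw [upd_ne k hk, upd_ne j hj]
        · rw [upd_ne k hk, Function.update_self]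
      rw [Finset.sum_congr rfl inner]
      have last : (∑ j, spin (Function.update σ i a i) * M i j * spin (Function.update σ i a j))
          = spin a * (∑ j, M i j * spin (σ j)) := by
        rw [Finset.mul_sum]
        refine Finset.sum_congr rfl fun j _ => ?_
        rcases eq_or_ne j i with rfl | hj
        · simp [hdiag]
        · rw [Function.update_self, Function.update_of_ne hj]; ring
      rw [Finset.sum_add_distrib, last]
      have cross : (∑ k ∈ Finset.univ.erase i, spin (σ k) * M k i * spin a)
          = spin a * (∑ j, M i j * spin (σ j)) := by
        rw [Finset.mul_sum, ← Finset.sum_erase_add _ _ (Finset.mem_univ i)]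
        have hz : spin a * (M i i * spin (σ i)) = 0 := by simp [hdiag]
        rw [hz, add_zero]
        refine Finset.sum_congr rfl fun k hk => ?_
        rw [hs k i]; ring
      rw [cross]; ring
    rw [e1, e2]
    unfold hfield
    ring
  unfold isingWt
  rw [key true, key false, ← Real.exp_add]
  congr 1
  simp [spin_true, spin_false]
  ring

def lgs (t : ℝ) : ℝ := Real.exp t / (Real.exp t + 1)

lemma lgs_nonneg (t : ℝ) : 0 ≤ lgs t := by
  unfold lgs; positivity

lemma lgs_le_one (t : ℝ) : lgs t ≤ 1 := by
  unfold lgs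
  rw [div_le_one (by positivity)]
  linarith

lemma lgs_hasDerivAt (t : ℝ) :
    HasDerivAt lgs (Real.exp t / (Real.exp t + 1) ^ 2) t := by
  have hne : Real.exp t + 1 ≠ 0 := by positivity
  have h1 : HasDerivAt (fun x => Real.exp x + 1) (Real.exp t) t :=
    (Real.hasDerivAt_exp t).add_const 1
  have h2 : HasDerivAt (fun x => (Real.exp x + 1)⁻¹)
      (-(Real.exp t) / (Real.exp t + 1) ^ 2) t := h1.inv hne
  have h3 : HasDerivAt (fun x => 1 - (Real.exp x + 1)⁻¹)
      (Real.exp t / (Real.exp t + 1) ^ 2) t := by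
    simpa [neg_div] using h2.const_sub 1
  have : lgs = fun x => 1 - (Real.exp x + 1)⁻¹ := by
    funext x
    have : Real.exp x + 1 ≠ 0 := by positivity
    unfold lgs
    field_simp
    ring
  rw [this]
  exact h3

lemma lgs_deriv_le (t : ℝ) : Real.exp t / (Real.exp t + 1) ^ 2 ≤ 1 / 4 := by
  rw [div_le_div_iff₀ (by positivity) (by norm_num)]
  nlinarith [sq_nonneg (Real.exp t - 1), Real.exp_pos t]

lemma lgs_lip_lt {a b : ℝ} (hab : a < b) : |lgs b - lgs a| ≤ (b - a) / 4 := by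
  obtain ⟨c, _, hc⟩ := exists_hasDerivAt_eq_slope lgs
    (fun t => Real.exp t / (Real.exp t + 1) ^ 2) hab
    (fun x _ => (lgs_hasDerivAt x).continuousAt.continuousWithinAt)
    (fun x _ => lgs_hasDerivAt x)
  have hba : b - a ≠ 0 := by linarith
  have heq := (div_eq_iff hba).mp hc.symm
  rw [heq, abs_mul, abs_of_nonneg (by positivity : (0:ℝ) ≤ Real.exp c / (Real.exp c + 1) ^ 2),
    abs_of_nonneg (by linarith : (0:ℝ) ≤ b - a)]
  have := lgs_deriv_le c
  nlinarith

lemma lgs_lip (a b : ℝ) : |lgs a - lgs b| ≤ |a - b| / 4 := by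
  rcases lt_trichotomy a b with h | h | h
  · rw [abs_sub_comm a b, abs_of_nonneg (by linarith : (0:ℝ) ≤ b - a), abs_sub_comm]
    exact lgs_lip_lt h
  · simp [h]
  · rw [abs_of_nonneg (by linarith : (0:ℝ) ≤ a - b)]
    exact lgs_lip_lt h

/-- heat-bath probability of `true` at site `i`. -/
def hbp {n : ℕ} (M : Matrix (Fin n) (Fin n) ℝ) (θ : Fin n → ℝ) (i : Fin n)
    (σ : Fin n → Bool) : ℝ := lgs (2 * hfield M θ i σ)

/-- maximal coupling of two Bernoulli(`p`), (`q`) distributions on `Bool`. -/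
def mc (p q : ℝ) : Bool → Bool → ℝ := fun a b =>
  if a then (if b then min p q else p - min p q)
  else (if b then q - min p q else 1 - p - q + min p q)

lemma mc_nonneg {p q : ℝ} (hp0 : 0 ≤ p) (hp1 : p ≤ 1) (hq0 : 0 ≤ q) (hq1 : q ≤ 1)
    (a b : Bool) : 0 ≤ mc p q a b := by
  rcases le_total p q with h | h <;>
    cases a <;> cases b <;> simp [mc, min_def, h] <;> linarith

lemma mc_sum (p q : ℝ) : ∑ a : Bool, ∑ b : Bool, mc p q a b = 1 := by
  simp [mc, Fintype.sum_bool]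

lemma mc_margin_left (p q : ℝ) (a : Bool) :
    ∑ b : Bool, mc p q a b = if a then p else 1 - p := by
  cases a <;> simp [mc, Fintype.sum_bool] <;> ring

lemma mc_margin_right (p q : ℝ) (b : Bool) :
    ∑ a : Bool, mc p q a b = if b then q else 1 - q := by
  cases b <;> simp [mc, Fintype.sum_bool] <;> ring

lemma mc_disagree (p q : ℝ) :
    ∑ a : Bool, ∑ b : Bool, mc p q a b * (if a = b then 0 else 1) = |p - q| := by
  rcases le_total p q with h | h
  · rw [abs_of_nonpos (by linarith)]
    simp only [mc, Fintype.sum_bool]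
    rw [min_eq_left h]; simp
  · rw [abs_of_nonneg (by linarith)]
    simp only [mc, Fintype.sum_bool]
    rw [min_eq_right h]; simp

/-- the conditional (pinned) unnormalized weight -/
def condWt {n : ℕ} (M : Matrix (Fin n) (Fin n) ℝ) (θ : Fin n → ℝ) (S : Finset (Fin n))
    (x : Fin n → Bool) (u : Fin n) (s : Bool) (σ : Fin n → Bool) : ℝ :=
  if (∀ w ∈ S, σ w = x w) ∧ σ u = s then isingWt M θ σ else 0

def condZ {n : ℕ} (M : Matrix (Fin n) (Fin n) ℝ) (θ : Fin n → ℝ) (S : Finset (Fin n))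
    (x : Fin n → Bool) (u : Fin n) (s : Bool) : ℝ := ∑ σ, condWt M θ S x u s σ

def condμ {n : ℕ} (M : Matrix (Fin n) (Fin n) ℝ) (θ : Fin n → ℝ) (S : Finset (Fin n))
    (x : Fin n → Bool) (u : Fin n) (s : Bool) (σ : Fin n → Bool) : ℝ :=
  condWt M θ S x u s σ / condZ M θ S x u s

lemma isingWt_pos {n : ℕ} (M : Matrix (Fin n) (Fin n) ℝ) (θ : Fin n → ℝ) (σ : Fin n → Bool) :
    0 < isingWt M θ σ := Real.exp_pos _

lemma condWt_nonneg {n : ℕ} (M : Matrix (Fin n) (Fin n) ℝ) (θ : Fin n → ℝ) (S : Finset (Fin n))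
    (x : Fin n → Bool) (u : Fin n) (s : Bool) (σ : Fin n → Bool) :
    0 ≤ condWt M θ S x u s σ := by
  unfold condWt; split
  · exact (isingWt_pos M θ σ).le
  · exact le_refl 0

lemma condZ_pos {n : ℕ} (M : Matrix (Fin n) (Fin n) ℝ) (θ : Fin n → ℝ) (S : Finset (Fin n))
    (x : Fin n → Bool) (u : Fin n) (s : Bool) (hu : u ∉ S) :
    0 < condZ M θ S x u s := by
  have hw : ∀ σ, 0 ≤ condWt M θ S x u s σ := condWt_nonneg M θ S x u s
  refine Finset.sum_pos' (fun σ _ => hw σ) ?_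
  refine ⟨fun j => if j = u then s else x j, Finset.mem_univ _, ?_⟩
  have hcond : (∀ w ∈ S, (fun j => if j = u then s else x j) w = x w) ∧
      (fun j => if j = u then s else x j) u = s := by
    constructor
    · intro w hw'
      have : w ≠ u := fun h => hu (h ▸ hw')
      simp [this]
    · simp
  unfold condWt
  rw [if_pos hcond]
  exact isingWt_pos M θ _

lemma condμ_nonneg {n : ℕ} (M : Matrix (Fin n) (Fin n) ℝ) (θ : Fin n → ℝ) (S : Finset (Fin n))
    (x : Fin n → Bool) (u : Fin n) (s : Bool) (hu : u ∉ S) (σ : Fin n → Bool) :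
    0 ≤ condμ M θ S x u s σ :=
  div_nonneg (condWt_nonneg M θ S x u s σ) (condZ_pos M θ S x u s hu).le

lemma condμ_sum {n : ℕ} (M : Matrix (Fin n) (Fin n) ℝ) (θ : Fin n → ℝ) (S : Finset (Fin n))
    (x : Fin n → Bool) (u : Fin n) (s : Bool) (hu : u ∉ S) :
    ∑ σ, condμ M θ S x u s σ = 1 := by
  unfold condμ
  rw [← Finset.sum_div]
  exact div_self (condZ_pos M θ S x u s hu).ne'

lemma condμ_eq_zero {n : ℕ} (M : Matrix (Fin n) (Fin n) ℝ) (θ : Fin n → ℝ) (S : Finset (Fin n))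
    (x : Fin n → Bool) (u : Fin n) (s : Bool) (σ : Fin n → Bool)
    (h : ¬ ((∀ w ∈ S, σ w = x w) ∧ σ u = s)) : condμ M θ S x u s σ = 0 := by
  unfold condμ condWt
  rw [if_neg h, zero_div]

/-- summation over configurations agreeing with `σ` off `i`. -/
lemma sum_update_pair {n : ℕ} (i : Fin n) (σ : Fin n → Bool) (g : (Fin n → Bool) → ℝ) :
    ∑ σ' : Fin n → Bool, (if ∀ j, j ≠ i → σ' j = σ j then g σ' else 0)
      = g (Function.update σ i true) + g (Function.update σ i false) := by
  rw [← Finset.sum_filter]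
  have hset : Finset.univ.filter (fun σ' : Fin n → Bool => ∀ j, j ≠ i → σ' j = σ j)
      = {Function.update σ i true, Function.update σ i false} := by
    ext σ'
    simp only [Finset.mem_filter, Finset.mem_univ, true_and, Finset.mem_insert,
      Finset.mem_singleton]
    constructor
    · intro h
      have hσ' : σ' = Function.update σ i (σ' i) := by
        funext j
        rcases eq_or_ne j i with rfl | hj
        · simp
        · rw [Function.update_of_ne hj]; exact h j hj
      cases hb : σ' i
      · right; rw [hσ', hb]
      · left; rw [hσ', hb]
    · rintro (rfl | rfl) <;> (intro j hj; rw [Function.update_of_ne hj])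
  rw [hset, Finset.sum_pair]
  intro h
  have := congrFun h i
  simp at this


lemma hbp_update {n : ℕ} (M : Matrix (Fin n) (Fin n) ℝ) (θ : Fin n → ℝ)
    (hdiag : ∀ i, M i i = 0) (i : Fin n) (σ : Fin n → Bool) (a : Bool) :
    hbp M θ i (Function.update σ i a) = hbp M θ i σ := by
  unfold hbp; rw [hfield_update M θ hdiag]

lemma condWt_update {n : ℕ} (M : Matrix (Fin n) (Fin n) ℝ) (θ : Fin n → ℝ)
    (hsymm : M.IsSymm) (hdiag : ∀ i, M i i = 0) (S : Finset (Fin n))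
    (x : Fin n → Bool) (u : Fin n) (s : Bool) (i : Fin n) (hiS : i ∉ S) (hiu : i ≠ u)
    (σ : Fin n → Bool) :
    condWt M θ S x u s (Function.update σ i true)
      = Real.exp (2 * hfield M θ i σ) * condWt M θ S x u s (Function.update σ i false) := by
  have hcond : ∀ a : Bool,
      ((∀ w ∈ S, Function.update σ i a w = x w) ∧ Function.update σ i a u = s)
        ↔ ((∀ w ∈ S, σ w = x w) ∧ σ u = s) := by
    intro a
    constructor
    · rintro ⟨h1, h2⟩
      refine ⟨fun w hw => ?_, ?_⟩
      · have hwi : w ≠ i := fun h => hiS (h ▸ hw)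
        rw [← h1 w hw, Function.update_of_ne hwi]
      · rw [← h2, Function.update_of_ne (Ne.symm hiu)]
    · rintro ⟨h1, h2⟩
      refine ⟨fun w hw => ?_, ?_⟩
      · have hwi : w ≠ i := fun h => hiS (h ▸ hw)
        rw [Function.update_of_ne hwi]; exact h1 w hw
      · rw [Function.update_of_ne (Ne.symm hiu)]; exact h2
  unfold condWt
  by_cases h : (∀ w ∈ S, σ w = x w) ∧ σ u = s
  · rw [if_pos ((hcond true).mpr h), if_pos ((hcond false).mpr h)]
    exact isingWt_update M θ hsymm hdiag i σ
  · rw [if_neg (fun hh => h ((hcond true).mp hh)), if_neg (fun hh => h ((hcond false).mp hh)),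
      mul_zero]

/-- invariance of the conditional Gibbs measure under heat-bath at a free site. -/
lemma hb_invariance {n : ℕ} (M : Matrix (Fin n) (Fin n) ℝ) (θ : Fin n → ℝ)
    (hsymm : M.IsSymm) (hdiag : ∀ i, M i i = 0) (S : Finset (Fin n))
    (x : Fin n → Bool) (u : Fin n) (s : Bool) (hu : u ∉ S)
    (i : Fin n) (hiS : i ∉ S) (hiu : i ≠ u) (σ' : Fin n → Bool) :
    ∑ σ : Fin n → Bool, condμ M θ S x u s σ *
        (if ∀ j, j ≠ i → σ' j = σ j
          then (if σ' i then hbp M θ i σ else 1 - hbp M θ i σ) else 0)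
      = condμ M θ S x u s σ' := by
  have flip : ∀ σ : Fin n → Bool,
      (∀ j, j ≠ i → σ' j = σ j) ↔ (∀ j, j ≠ i → σ j = σ' j) :=
    fun σ => ⟨fun h j hj => (h j hj).symm, fun h j hj => (h j hj).symm⟩
  have step1 : ∀ σ : Fin n → Bool, condμ M θ S x u s σ *
        (if ∀ j, j ≠ i → σ' j = σ j
          then (if σ' i then hbp M θ i σ else 1 - hbp M θ i σ) else 0)
      = (if ∀ j, j ≠ i → σ j = σ' j
          then condμ M θ S x u s σ * (if σ' i then hbp M θ i σ else 1 - hbp M θ i σ) else 0) := by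
    intro σ
    by_cases h : ∀ j, j ≠ i → σ j = σ' j
    · rw [if_pos h, if_pos ((flip σ).mpr h)]
    · rw [if_neg h, if_neg (fun hh => h ((flip σ).mp hh)), mul_zero]
  rw [Finset.sum_congr rfl (fun σ _ => step1 σ)]
  rw [sum_update_pair i σ' (fun σ =>
    condμ M θ S x u s σ * (if σ' i then hbp M θ i σ else 1 - hbp M θ i σ))]
  rw [hbp_update M θ hdiag, hbp_update M θ hdiag]
  set E := Real.exp (2 * hfield M θ i σ') with hE
  have hEpos : 0 < E := Real.exp_pos _
  have hwkey : condWt M θ S x u s (Function.update σ' i true)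
      = E * condWt M θ S x u s (Function.update σ' i false) :=
    condWt_update M θ hsymm hdiag S x u s i hiS hiu σ'
  have hbpE : hbp M θ i σ' = E / (E + 1) := rfl
  have hZpos := condZ_pos M θ S x u s hu
  set w0 := condWt M θ S x u s (Function.update σ' i false) with hw0
  have hself : Function.update σ' i (σ' i) = σ' := Function.update_eq_self i σ'
  have hgoal : condWt M θ S x u s (Function.update σ' i true) *
        (if σ' i then hbp M θ i σ' else 1 - hbp M θ i σ')
      + condWt M θ S x u s (Function.update σ' i false) *
        (if σ' i then hbp M θ i σ' else 1 - hbp M θ i σ')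
      = condWt M θ S x u s σ' := by
    cases hb : σ' i
    · rw [if_neg (by simp)]
      have h2 : Function.update σ' i false = σ' := by
        funext j
        rcases eq_or_ne j i with rfl | hj
        · simp [hb]
        · rw [Function.update_of_ne hj]
      have hσ' : condWt M θ S x u s σ' = w0 := by rw [hw0, h2]
      rw [hwkey, hbpE, hσ']
      field_simp
      ring
    · rw [if_pos (by simp)]
      have h2 : Function.update σ' i true = σ' := by
        funext j
        rcases eq_or_ne j i with rfl | hj
        · simp [hb]
        · rw [Function.update_of_ne hj]
      have hσ' : condWt M θ S x u s σ' = E * w0 := h2 ▸ hwkey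
      rw [hwkey, hbpE, hσ']
      field_simp
      ring
  unfold condμ
  rw [div_mul_eq_mul_div, div_mul_eq_mul_div, ← add_div, hgoal]

/-- one step of the coupled (random-scan) heat-bath dynamics. -/
def cstep {n : ℕ} (M : Matrix (Fin n) (Fin n) ℝ) (θ : Fin n → ℝ) (F : Finset (Fin n))
    (pc : (Fin n → Bool) → (Fin n → Bool) → ℝ) :
    (Fin n → Bool) → (Fin n → Bool) → ℝ := fun σ' τ' =>
  (F.card : ℝ)⁻¹ * ∑ i ∈ F, ∑ σ : Fin n → Bool, ∑ τ : Fin n → Bool, pc σ τ *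
    (if (∀ j, j ≠ i → σ' j = σ j) ∧ (∀ j, j ≠ i → τ' j = τ j)
      then mc (hbp M θ i σ) (hbp M θ i τ) (σ' i) (τ' i) else 0)

lemma cstep_nonneg {n : ℕ} (M : Matrix (Fin n) (Fin n) ℝ) (θ : Fin n → ℝ)
    (F : Finset (Fin n)) (pc : (Fin n → Bool) → (Fin n → Bool) → ℝ)
    (hpc : ∀ σ τ, 0 ≤ pc σ τ) (σ' τ' : Fin n → Bool) : 0 ≤ cstep M θ F pc σ' τ' := by
  unfold cstep
  refine mul_nonneg (by positivity) ?_
  refine Finset.sum_nonneg fun i _ => Finset.sum_nonneg fun σ _ => Finset.sum_nonneg fun τ _ => ?_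
  refine mul_nonneg (hpc σ τ) ?_
  split
  · exact mc_nonneg (lgs_nonneg _) (lgs_le_one _) (lgs_nonneg _) (lgs_le_one _) _ _
  · exact le_refl 0

lemma inner_tau {n : ℕ} (M : Matrix (Fin n) (Fin n) ℝ) (θ : Fin n → ℝ)
    (i : Fin n) (σ τ σ' : Fin n → Bool) :
    ∑ τ' : Fin n → Bool,
      (if (∀ j, j ≠ i → σ' j = σ j) ∧ (∀ j, j ≠ i → τ' j = τ j)
        then mc (hbp M θ i σ) (hbp M θ i τ) (σ' i) (τ' i) else 0)
    = (if ∀ j, j ≠ i → σ' j = σ j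
        then (if σ' i then hbp M θ i σ else 1 - hbp M θ i σ) else 0) := by
  set p := hbp M θ i σ
  set q := hbp M θ i τ
  by_cases hP : ∀ j, j ≠ i → σ' j = σ j
  · rw [if_pos hP]
    have e1 : ∀ τ' : Fin n → Bool,
        (if (∀ j, j ≠ i → σ' j = σ j) ∧ (∀ j, j ≠ i → τ' j = τ j)
          then mc p q (σ' i) (τ' i) else 0)
        = (if (∀ j, j ≠ i → τ' j = τ j) then mc p q (σ' i) (τ' i) else 0) := by
      intro τ'
      by_cases hQ : ∀ j, j ≠ i → τ' j = τ j
      · rw [if_pos ⟨hP, hQ⟩, if_pos hQ]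
      · rw [if_neg (fun h => hQ h.2), if_neg hQ]
    rw [Finset.sum_congr rfl fun τ' _ => e1 τ']
    rw [sum_update_pair i τ (fun τ'' => mc p q (σ' i) (τ'' i))]
    have := mc_margin_left p q (σ' i)
    rw [Fintype.sum_bool] at this
    simpa using this
  · rw [if_neg hP]
    refine Finset.sum_eq_zero fun τ' _ => ?_
    exact if_neg (fun h => hP h.1)

lemma inner_sigma {n : ℕ} (M : Matrix (Fin n) (Fin n) ℝ) (θ : Fin n → ℝ)
    (i : Fin n) (σ τ τ' : Fin n → Bool) :
    ∑ σ' : Fin n → Bool,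
      (if (∀ j, j ≠ i → σ' j = σ j) ∧ (∀ j, j ≠ i → τ' j = τ j)
        then mc (hbp M θ i σ) (hbp M θ i τ) (σ' i) (τ' i) else 0)
    = (if ∀ j, j ≠ i → τ' j = τ j
        then (if τ' i then hbp M θ i τ else 1 - hbp M θ i τ) else 0) := by
  set p := hbp M θ i σ
  set q := hbp M θ i τ
  by_cases hQ : ∀ j, j ≠ i → τ' j = τ j
  · rw [if_pos hQ]
    have e1 : ∀ σ' : Fin n → Bool,
        (if (∀ j, j ≠ i → σ' j = σ j) ∧ (∀ j, j ≠ i → τ' j = τ j)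
          then mc p q (σ' i) (τ' i) else 0)
        = (if (∀ j, j ≠ i → σ' j = σ j) then mc p q (σ' i) (τ' i) else 0) := by
      intro σ'
      by_cases hP : ∀ j, j ≠ i → σ' j = σ j
      · rw [if_pos ⟨hP, hQ⟩, if_pos hP]
      · rw [if_neg (fun h => hP h.1), if_neg hP]
    rw [Finset.sum_congr rfl fun σ' _ => e1 σ']
    rw [sum_update_pair i σ (fun σ'' => mc p q (σ'' i) (τ' i))]
    have := mc_margin_right p q (τ' i)
    rw [Fintype.sum_bool] at this
    simpa using this
  · rw [if_neg hQ]
    refine Finset.sum_eq_zero fun σ' _ => ?_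
    exact if_neg (fun h => hQ h.2)

lemma cstep_left_marginal {n : ℕ} (M : Matrix (Fin n) (Fin n) ℝ) (θ : Fin n → ℝ)
    (hsymm : M.IsSymm) (hdiag : ∀ i, M i i = 0) (S : Finset (Fin n))
    (x : Fin n → Bool) (u : Fin n) (hu : u ∉ S) (F : Finset (Fin n))
    (hfree : ∀ i ∈ F, i ∉ S ∧ i ≠ u) (hcard : (F.card : ℝ) ≠ 0)
    (pc : (Fin n → Bool) → (Fin n → Bool) → ℝ)
    (hL : ∀ σ, ∑ τ, pc σ τ = condμ M θ S x u true σ) (σ' : Fin n → Bool) :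
    ∑ τ', cstep M θ F pc σ' τ' = condμ M θ S x u true σ' := by
  unfold cstep
  rw [← Finset.mul_sum]
  have swap : ∑ τ' : Fin n → Bool, ∑ i ∈ F, ∑ σ : Fin n → Bool, ∑ τ : Fin n → Bool, pc σ τ *
      (if (∀ j, j ≠ i → σ' j = σ j) ∧ (∀ j, j ≠ i → τ' j = τ j)
        then mc (hbp M θ i σ) (hbp M θ i τ) (σ' i) (τ' i) else 0)
      = ∑ i ∈ F, ∑ σ : Fin n → Bool, ∑ τ : Fin n → Bool, ∑ τ' : Fin n → Bool, pc σ τ *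
      (if (∀ j, j ≠ i → σ' j = σ j) ∧ (∀ j, j ≠ i → τ' j = τ j)
        then mc (hbp M θ i σ) (hbp M θ i τ) (σ' i) (τ' i) else 0) := by
    rw [Finset.sum_comm]
    refine Finset.sum_congr rfl fun i _ => ?_
    rw [Finset.sum_comm]
    refine Finset.sum_congr rfl fun σ _ => ?_
    rw [Finset.sum_comm]
  rw [swap]
  have key : ∀ i ∈ F, (∑ σ : Fin n → Bool, ∑ τ : Fin n → Bool, ∑ τ' : Fin n → Bool, pc σ τ *
      (if (∀ j, j ≠ i → σ' j = σ j) ∧ (∀ j, j ≠ i → τ' j = τ j)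
        then mc (hbp M θ i σ) (hbp M θ i τ) (σ' i) (τ' i) else 0))
      = condμ M θ S x u true σ' := by
    intro i hi
    have e2 : ∀ σ τ : Fin n → Bool, (∑ τ' : Fin n → Bool, pc σ τ *
        (if (∀ j, j ≠ i → σ' j = σ j) ∧ (∀ j, j ≠ i → τ' j = τ j)
          then mc (hbp M θ i σ) (hbp M θ i τ) (σ' i) (τ' i) else 0))
        = pc σ τ * (if ∀ j, j ≠ i → σ' j = σ j
            then (if σ' i then hbp M θ i σ else 1 - hbp M θ i σ) else 0) := by
      intro σ τ
      rw [← Finset.mul_sum, inner_tau]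
    have e3 : ∀ σ : Fin n → Bool, (∑ τ : Fin n → Bool, pc σ τ *
        (if ∀ j, j ≠ i → σ' j = σ j
          then (if σ' i then hbp M θ i σ else 1 - hbp M θ i σ) else 0))
        = condμ M θ S x u true σ * (if ∀ j, j ≠ i → σ' j = σ j
            then (if σ' i then hbp M θ i σ else 1 - hbp M θ i σ) else 0) := by
      intro σ
      rw [← Finset.sum_mul, hL]
    calc (∑ σ : Fin n → Bool, ∑ τ : Fin n → Bool, ∑ τ' : Fin n → Bool, pc σ τ *
        (if (∀ j, j ≠ i → σ' j = σ j) ∧ (∀ j, j ≠ i → τ' j = τ j)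
          then mc (hbp M θ i σ) (hbp M θ i τ) (σ' i) (τ' i) else 0))
        = ∑ σ : Fin n → Bool, condμ M θ S x u true σ * (if ∀ j, j ≠ i → σ' j = σ j
            then (if σ' i then hbp M θ i σ else 1 - hbp M θ i σ) else 0) := by
          refine Finset.sum_congr rfl fun σ _ => ?_
          rw [Finset.sum_congr rfl fun τ (_ : τ ∈ Finset.univ) => e2 σ τ, e3]
      _ = condμ M θ S x u true σ' :=
          hb_invariance M θ hsymm hdiag S x u true hu i (hfree i hi).1 (hfree i hi).2 σ'
  rw [Finset.sum_congr rfl key, Finset.sum_const, nsmul_eq_mul, ← mul_assoc,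
    inv_mul_cancel₀ hcard, one_mul]

lemma cstep_right_marginal {n : ℕ} (M : Matrix (Fin n) (Fin n) ℝ) (θ : Fin n → ℝ)
    (hsymm : M.IsSymm) (hdiag : ∀ i, M i i = 0) (S : Finset (Fin n))
    (x : Fin n → Bool) (u : Fin n) (hu : u ∉ S) (F : Finset (Fin n))
    (hfree : ∀ i ∈ F, i ∉ S ∧ i ≠ u) (hcard : (F.card : ℝ) ≠ 0)
    (pc : (Fin n → Bool) → (Fin n → Bool) → ℝ)
    (hR : ∀ τ, ∑ σ, pc σ τ = condμ M θ S x u false τ) (τ' : Fin n → Bool) :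
    ∑ σ', cstep M θ F pc σ' τ' = condμ M θ S x u false τ' := by
  unfold cstep
  have swap : ∀ i : Fin n, ∑ σ' : Fin n → Bool, ∑ σ : Fin n → Bool, ∑ τ : Fin n → Bool,
      pc σ τ * (if (∀ j, j ≠ i → σ' j = σ j) ∧ (∀ j, j ≠ i → τ' j = τ j)
        then mc (hbp M θ i σ) (hbp M θ i τ) (σ' i) (τ' i) else 0)
      = ∑ τ : Fin n → Bool, ∑ σ : Fin n → Bool, ∑ σ' : Fin n → Bool,
      pc σ τ * (if (∀ j, j ≠ i → σ' j = σ j) ∧ (∀ j, j ≠ i → τ' j = τ j)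
        then mc (hbp M θ i σ) (hbp M θ i τ) (σ' i) (τ' i) else 0) := by
    intro i
    calc (∑ σ' : Fin n → Bool, ∑ σ : Fin n → Bool, ∑ τ : Fin n → Bool,
        pc σ τ * (if (∀ j, j ≠ i → σ' j = σ j) ∧ (∀ j, j ≠ i → τ' j = τ j)
          then mc (hbp M θ i σ) (hbp M θ i τ) (σ' i) (τ' i) else 0))
        = ∑ σ : Fin n → Bool, ∑ σ' : Fin n → Bool, ∑ τ : Fin n → Bool,
        pc σ τ * (if (∀ j, j ≠ i → σ' j = σ j) ∧ (∀ j, j ≠ i → τ' j = τ j)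
          then mc (hbp M θ i σ) (hbp M θ i τ) (σ' i) (τ' i) else 0) := Finset.sum_comm
      _ = ∑ σ : Fin n → Bool, ∑ τ : Fin n → Bool, ∑ σ' : Fin n → Bool,
        pc σ τ * (if (∀ j, j ≠ i → σ' j = σ j) ∧ (∀ j, j ≠ i → τ' j = τ j)
          then mc (hbp M θ i σ) (hbp M θ i τ) (σ' i) (τ' i) else 0) :=
          Finset.sum_congr rfl fun σ _ => Finset.sum_comm
      _ = ∑ τ : Fin n → Bool, ∑ σ : Fin n → Bool, ∑ σ' : Fin n → Bool,
        pc σ τ * (if (∀ j, j ≠ i → σ' j = σ j) ∧ (∀ j, j ≠ i → τ' j = τ j)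
          then mc (hbp M θ i σ) (hbp M θ i τ) (σ' i) (τ' i) else 0) := Finset.sum_comm
  have master : ∑ σ' : Fin n → Bool, (F.card : ℝ)⁻¹ * ∑ i ∈ F, ∑ σ : Fin n → Bool,
      ∑ τ : Fin n → Bool, pc σ τ *
      (if (∀ j, j ≠ i → σ' j = σ j) ∧ (∀ j, j ≠ i → τ' j = τ j)
        then mc (hbp M θ i σ) (hbp M θ i τ) (σ' i) (τ' i) else 0)
      = (F.card : ℝ)⁻¹ * ∑ i ∈ F, ∑ σ' : Fin n → Bool, ∑ σ : Fin n → Bool,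
      ∑ τ : Fin n → Bool, pc σ τ *
      (if (∀ j, j ≠ i → σ' j = σ j) ∧ (∀ j, j ≠ i → τ' j = τ j)
        then mc (hbp M θ i σ) (hbp M θ i τ) (σ' i) (τ' i) else 0) := by
    rw [← Finset.mul_sum, Finset.sum_comm]
  rw [master]
  have key : ∀ i ∈ F, (∑ σ' : Fin n → Bool, ∑ σ : Fin n → Bool, ∑ τ : Fin n → Bool, pc σ τ *
      (if (∀ j, j ≠ i → σ' j = σ j) ∧ (∀ j, j ≠ i → τ' j = τ j)
        then mc (hbp M θ i σ) (hbp M θ i τ) (σ' i) (τ' i) else 0))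
      = condμ M θ S x u false τ' := by
    intro i hi
    rw [swap i]
    have e2 : ∀ τ σ : Fin n → Bool, (∑ σ' : Fin n → Bool, pc σ τ *
        (if (∀ j, j ≠ i → σ' j = σ j) ∧ (∀ j, j ≠ i → τ' j = τ j)
          then mc (hbp M θ i σ) (hbp M θ i τ) (σ' i) (τ' i) else 0))
        = pc σ τ * (if ∀ j, j ≠ i → τ' j = τ j
            then (if τ' i then hbp M θ i τ else 1 - hbp M θ i τ) else 0) := by
      intro τ σ
      rw [← Finset.mul_sum, inner_sigma]
    have e3 : ∀ τ : Fin n → Bool, (∑ σ : Fin n → Bool, pc σ τ *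
        (if ∀ j, j ≠ i → τ' j = τ j
          then (if τ' i then hbp M θ i τ else 1 - hbp M θ i τ) else 0))
        = condμ M θ S x u false τ * (if ∀ j, j ≠ i → τ' j = τ j
            then (if τ' i then hbp M θ i τ else 1 - hbp M θ i τ) else 0) := by
      intro τ
      rw [← Finset.sum_mul, hR]
    calc (∑ τ : Fin n → Bool, ∑ σ : Fin n → Bool, ∑ σ' : Fin n → Bool, pc σ τ *
        (if (∀ j, j ≠ i → σ' j = σ j) ∧ (∀ j, j ≠ i → τ' j = τ j)
          then mc (hbp M θ i σ) (hbp M θ i τ) (σ' i) (τ' i) else 0))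
        = ∑ τ : Fin n → Bool, condμ M θ S x u false τ * (if ∀ j, j ≠ i → τ' j = τ j
            then (if τ' i then hbp M θ i τ else 1 - hbp M θ i τ) else 0) := by
          refine Finset.sum_congr rfl fun τ _ => ?_
          rw [Finset.sum_congr rfl fun σ (_ : σ ∈ Finset.univ) => e2 τ σ, e3]
      _ = condμ M θ S x u false τ' :=
          hb_invariance M θ hsymm hdiag S x u false hu i (hfree i hi).1 (hfree i hi).2 τ'
  rw [Finset.sum_congr rfl key, Finset.sum_const, nsmul_eq_mul, ← mul_assoc,
    inv_mul_cancel₀ hcard, one_mul]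


lemma sum_swap4 {α β : Type*} [Fintype α] [Fintype β] (g : α → α → β → β → ℝ) :
    ∑ a, ∑ b, ∑ c, ∑ d, g a b c d = ∑ c, ∑ d, ∑ a, ∑ b, g a b c d := by
  calc (∑ a, ∑ b, ∑ c, ∑ d, g a b c d)
      = ∑ a, ∑ c, ∑ b, ∑ d, g a b c d :=
        Finset.sum_congr rfl fun a _ => Finset.sum_comm
    _ = ∑ c, ∑ a, ∑ b, ∑ d, g a b c d := Finset.sum_comm
    _ = ∑ c, ∑ a, ∑ d, ∑ b, g a b c d :=
        Finset.sum_congr rfl fun c _ => Finset.sum_congr rfl fun a _ => Finset.sum_comm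
    _ = ∑ c, ∑ d, ∑ a, ∑ b, g a b c d :=
        Finset.sum_congr rfl fun c _ => Finset.sum_comm

lemma sum_update_pair2 {n : ℕ} (k : Fin n) (σ τ : Fin n → Bool)
    (g : (Fin n → Bool) → (Fin n → Bool) → ℝ) :
    ∑ σ' : Fin n → Bool, ∑ τ' : Fin n → Bool,
      (if (∀ j, j ≠ k → σ' j = σ j) ∧ (∀ j, j ≠ k → τ' j = τ j) then g σ' τ' else 0)
    = ∑ a : Bool, ∑ c : Bool, g (Function.update σ k a) (Function.update τ k c) := by
  have inner : ∀ σ' : Fin n → Bool, (∑ τ' : Fin n → Bool,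
      (if (∀ j, j ≠ k → σ' j = σ j) ∧ (∀ j, j ≠ k → τ' j = τ j) then g σ' τ' else 0))
      = (if (∀ j, j ≠ k → σ' j = σ j)
          then g σ' (Function.update τ k true) + g σ' (Function.update τ k false) else 0) := by
    intro σ'
    by_cases hP : ∀ j, j ≠ k → σ' j = σ j
    · rw [if_pos hP]
      have e : ∀ τ' : Fin n → Bool,
          (if (∀ j, j ≠ k → σ' j = σ j) ∧ (∀ j, j ≠ k → τ' j = τ j) then g σ' τ' else 0)
          = (if (∀ j, j ≠ k → τ' j = τ j) then g σ' τ' else 0) := by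
        intro τ'
        by_cases hQ : ∀ j, j ≠ k → τ' j = τ j
        · rw [if_pos ⟨hP, hQ⟩, if_pos hQ]
        · rw [if_neg (fun h => hQ h.2), if_neg hQ]
      rw [Finset.sum_congr rfl fun τ' _ => e τ', sum_update_pair k τ (g σ')]
    · rw [if_neg hP]
      exact Finset.sum_eq_zero fun τ' _ => if_neg (fun h => hP h.1)
  rw [Finset.sum_congr rfl fun σ' _ => inner σ']
  rw [sum_update_pair k σ (fun σ'' => g σ'' (Function.update τ k true)
    + g σ'' (Function.update τ k false))]
  rw [Fintype.sum_bool]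
  refine congrArg₂ (· + ·) ?_ ?_ <;> rw [Fintype.sum_bool]

lemma hbp_lip {n : ℕ} (b : ℝ) (M : Matrix (Fin n) (Fin n) ℝ) (θ : Fin n → ℝ)
    (hbound : ∀ i j, |M i j| ≤ b) (i : Fin n) (σ τ : Fin n → Bool) :
    |hbp M θ i σ - hbp M θ i τ|
      ≤ ∑ j, (b * (if M i j ≠ 0 then 1 else 0)) * (if σ j = τ j then 0 else 1) := by
  have hb0 : 0 ≤ b := le_trans (abs_nonneg _) (hbound i i)
  have step1 : |hbp M θ i σ - hbp M θ i τ|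
      ≤ |hfield M θ i σ - hfield M θ i τ| / 2 := by
    have := lgs_lip (2 * hfield M θ i σ) (2 * hfield M θ i τ)
    have e : |2 * hfield M θ i σ - 2 * hfield M θ i τ|
        = 2 * |hfield M θ i σ - hfield M θ i τ| := by
      rw [show 2 * hfield M θ i σ - 2 * hfield M θ i τ
        = 2 * (hfield M θ i σ - hfield M θ i τ) by ring, abs_mul]
      norm_num
    unfold hbp
    rw [e] at this
    linarith
  have step2 : |hfield M θ i σ - hfield M θ i τ|
      ≤ ∑ j, (b * (if M i j ≠ 0 then 1 else 0)) * (2 * (if σ j = τ j then 0 else 1)) := by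
    have e : hfield M θ i σ - hfield M θ i τ
        = ∑ j, M i j * (spin (σ j) - spin (τ j)) := by
      unfold hfield
      rw [show ∀ (A B C : ℝ), A + B - (A + C) = B - C from fun A B C => by ring]
      rw [← Finset.sum_sub_distrib]
      exact Finset.sum_congr rfl fun j _ => by ring
    rw [e]
    refine (Finset.abs_sum_le_sum_abs _ _).trans (Finset.sum_le_sum fun j _ => ?_)
    rw [abs_mul]
    by_cases hσ : σ j = τ j
    · simp [hσ]
    · rw [if_neg hσ]
      have hsp : |spin (σ j) - spin (τ j)| = 2 := by
        cases hs : σ j <;> cases ht : τ j <;> simp_all [spin] <;> norm_num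
      rw [hsp]
      by_cases hM : M i j = 0
      · simp [hM]
      · rw [if_pos hM]
        nlinarith [hbound i j, abs_nonneg (M i j)]
  calc |hbp M θ i σ - hbp M θ i τ| ≤ |hfield M θ i σ - hfield M θ i τ| / 2 := step1
    _ ≤ (∑ j, (b * (if M i j ≠ 0 then 1 else 0)) * (2 * (if σ j = τ j then 0 else 1))) / 2 := by
        linarith [step2]
    _ = ∑ j, (b * (if M i j ≠ 0 then 1 else 0)) * (if σ j = τ j then 0 else 1) := by
        rw [Finset.sum_div]
        exact Finset.sum_congr rfl fun j _ => by ring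

/-- probability of disagreement at site `i` under a coupling. -/
def ddis {n : ℕ} (pc : (Fin n → Bool) → (Fin n → Bool) → ℝ) (i : Fin n) : ℝ :=
  ∑ σ : Fin n → Bool, ∑ τ : Fin n → Bool, pc σ τ * (if σ i = τ i then 0 else 1)

lemma ddis_nonneg {n : ℕ} (pc : (Fin n → Bool) → (Fin n → Bool) → ℝ)
    (hpc : ∀ σ τ, 0 ≤ pc σ τ) (i : Fin n) : 0 ≤ ddis pc i :=
  Finset.sum_nonneg fun σ _ => Finset.sum_nonneg fun τ _ =>
    mul_nonneg (hpc σ τ) (by split <;> norm_num)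

lemma ddis_step {n : ℕ} (b : ℝ) (M : Matrix (Fin n) (Fin n) ℝ) (θ : Fin n → ℝ)
    (hbound : ∀ i j, |M i j| ≤ b)
    (F : Finset (Fin n)) (hcard : (F.card : ℝ) ≠ 0)
    (pc : (Fin n → Bool) → (Fin n → Bool) → ℝ) (hpc : ∀ σ τ, 0 ≤ pc σ τ)
    (i : Fin n) (hi : i ∈ F) :
    ddis (cstep M θ F pc) i ≤ (1 - (F.card : ℝ)⁻¹) * ddis pc i
      + (F.card : ℝ)⁻¹ * ∑ j, (b * (if M i j ≠ 0 then 1 else 0)) * ddis pc j := by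
  classical
  set f : ℝ := (F.card : ℝ) with hf
  set g : Fin n → (Fin n → Bool) → (Fin n → Bool) → (Fin n → Bool) → (Fin n → Bool) → ℝ :=
    fun k σ τ σ' τ' => pc σ τ *
        ((if (∀ j, j ≠ k → σ' j = σ j) ∧ (∀ j, j ≠ k → τ' j = τ j)
          then mc (hbp M θ k σ) (hbp M θ k τ) (σ' k) (τ' k) else 0)
          * (if σ' i = τ' i then 0 else 1)) with hg
  have e1 : ∀ σ' τ' : Fin n → Bool, cstep M θ F pc σ' τ' * (if σ' i = τ' i then 0 else 1)
      = f⁻¹ * ∑ k ∈ F, ∑ σ : Fin n → Bool, ∑ τ : Fin n → Bool, g k σ τ σ' τ' := by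
    intro σ' τ'
    unfold cstep
    rw [mul_assoc]
    refine congrArg (f⁻¹ * ·) ?_
    rw [Finset.sum_mul]
    refine Finset.sum_congr rfl fun k _ => ?_
    rw [Finset.sum_mul]
    refine Finset.sum_congr rfl fun σ _ => ?_
    rw [Finset.sum_mul]
    refine Finset.sum_congr rfl fun τ _ => ?_
    rw [hg, mul_assoc]
  have e2 : ddis (cstep M θ F pc) i
      = f⁻¹ * ∑ k ∈ F, ∑ σ : Fin n → Bool, ∑ τ : Fin n → Bool,
          ∑ σ' : Fin n → Bool, ∑ τ' : Fin n → Bool, g k σ τ σ' τ' := by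
    unfold ddis
    rw [Finset.sum_congr rfl fun σ' (_ : σ' ∈ Finset.univ) =>
      Finset.sum_congr rfl fun τ' (_ : τ' ∈ Finset.univ) => e1 σ' τ']
    rw [Finset.sum_congr rfl fun σ' (_ : σ' ∈ Finset.univ) => (Finset.mul_sum _ _ _).symm,
      ← Finset.mul_sum]
    refine congrArg (f⁻¹ * ·) ?_
    calc (∑ σ' : Fin n → Bool, ∑ τ' : Fin n → Bool, ∑ k ∈ F, ∑ σ : Fin n → Bool,
          ∑ τ : Fin n → Bool, g k σ τ σ' τ')
        = ∑ σ' : Fin n → Bool, ∑ k ∈ F, ∑ τ' : Fin n → Bool, ∑ σ : Fin n → Bool,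
          ∑ τ : Fin n → Bool, g k σ τ σ' τ' :=
          Finset.sum_congr rfl fun σ' _ => Finset.sum_comm
      _ = ∑ k ∈ F, ∑ σ' : Fin n → Bool, ∑ τ' : Fin n → Bool, ∑ σ : Fin n → Bool,
          ∑ τ : Fin n → Bool, g k σ τ σ' τ' := Finset.sum_comm
      _ = ∑ k ∈ F, ∑ σ : Fin n → Bool, ∑ τ : Fin n → Bool, ∑ σ' : Fin n → Bool,
          ∑ τ' : Fin n → Bool, g k σ τ σ' τ' :=
          Finset.sum_congr rfl fun k _ =>
            sum_swap4 (fun σ' τ' σ τ => g k σ τ σ' τ')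
  have hA : ∀ k σ τ, (∑ σ' : Fin n → Bool, ∑ τ' : Fin n → Bool, g k σ τ σ' τ')
      = pc σ τ * (if k = i then |hbp M θ k σ - hbp M θ k τ|
          else (if σ i = τ i then 0 else 1)) := by
    intro k σ τ
    have e3 : ∀ σ' τ' : Fin n → Bool, g k σ τ σ' τ'
        = (if (∀ j, j ≠ k → σ' j = σ j) ∧ (∀ j, j ≠ k → τ' j = τ j)
            then pc σ τ * (mc (hbp M θ k σ) (hbp M θ k τ) (σ' k) (τ' k)
              * (if σ' i = τ' i then 0 else 1)) else 0) := by
      intro σ' τ'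
      simp only [hg]
      by_cases h : (∀ j, j ≠ k → σ' j = σ j) ∧ (∀ j, j ≠ k → τ' j = τ j)
      · rw [if_pos h, if_pos h]
      · rw [if_neg h, if_neg h, zero_mul, mul_zero]
    rw [Finset.sum_congr rfl fun σ' (_ : σ' ∈ Finset.univ) =>
      Finset.sum_congr rfl fun τ' (_ : τ' ∈ Finset.univ) => e3 σ' τ']
    rw [sum_update_pair2 k σ τ (fun σ'' τ'' => pc σ τ *
      (mc (hbp M θ k σ) (hbp M θ k τ) (σ'' k) (τ'' k)
        * (if σ'' i = τ'' i then 0 else 1)))]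
    rw [Finset.sum_congr rfl fun a (_ : a ∈ Finset.univ) => (Finset.mul_sum _ _ _).symm,
      ← Finset.mul_sum]
    refine congrArg (pc σ τ * ·) ?_
    rcases eq_or_ne k i with rfl | hki
    · rw [if_pos rfl]
      calc (∑ a : Bool, ∑ c : Bool, mc (hbp M θ k σ) (hbp M θ k τ)
              ((Function.update σ k a) k) ((Function.update τ k c) k)
            * (if (Function.update σ k a) k = (Function.update τ k c) k then 0 else 1))
          = ∑ a : Bool, ∑ c : Bool, mc (hbp M θ k σ) (hbp M θ k τ) a c
            * (if a = c then 0 else 1) := by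
            refine Finset.sum_congr rfl fun a _ => Finset.sum_congr rfl fun c _ => ?_
            rw [Function.update_self, Function.update_self]
        _ = |hbp M θ k σ - hbp M θ k τ| := mc_disagree _ _
    · have upd_i : ∀ (a c : Bool),
          ((Function.update σ k a) i = (Function.update τ k c) i) ↔ (σ i = τ i) := by
        intro a c
        rw [Function.update_of_ne (Ne.symm hki), Function.update_of_ne (Ne.symm hki)]
      rw [if_neg hki]
      calc (∑ a : Bool, ∑ c : Bool, mc (hbp M θ k σ) (hbp M θ k τ)
              ((Function.update σ k a) k) ((Function.update τ k c) k)
            * (if (Function.update σ k a) i = (Function.update τ k c) i then 0 else 1))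
          = ∑ a : Bool, ∑ c : Bool, mc (hbp M θ k σ) (hbp M θ k τ) a c
            * (if σ i = τ i then 0 else 1) := by
            refine Finset.sum_congr rfl fun a _ => Finset.sum_congr rfl fun c _ => ?_
            rw [Function.update_self, Function.update_self]
            by_cases h : σ i = τ i
            · rw [if_pos ((upd_i a c).mpr h), if_pos h]
            · rw [if_neg (fun hh => h ((upd_i a c).mp hh)), if_neg h]
        _ = (if σ i = τ i then 0 else 1) := by
            rw [Finset.sum_congr rfl fun a (_ : a ∈ Finset.univ) => (Finset.sum_mul _ _ _).symm,
              ← Finset.sum_mul, mc_sum, one_mul]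
  have e4 : ddis (cstep M θ F pc) i
      = f⁻¹ * ((∑ σ : Fin n → Bool, ∑ τ : Fin n → Bool,
            pc σ τ * |hbp M θ i σ - hbp M θ i τ|)
          + ((F.card : ℝ) - 1) * ddis pc i) := by
    rw [e2]
    refine congrArg (f⁻¹ * ·) ?_
    have hsplit : ∀ k ∈ F, (∑ σ : Fin n → Bool, ∑ τ : Fin n → Bool,
        ∑ σ' : Fin n → Bool, ∑ τ' : Fin n → Bool, g k σ τ σ' τ')
        = if k = i then (∑ σ : Fin n → Bool, ∑ τ : Fin n → Bool,
            pc σ τ * |hbp M θ i σ - hbp M θ i τ|) else ddis pc i := by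
      intro k _
      rw [Finset.sum_congr rfl fun σ (_ : σ ∈ Finset.univ) =>
        Finset.sum_congr rfl fun τ (_ : τ ∈ Finset.univ) => hA k σ τ]
      rcases eq_or_ne k i with rfl | hki
      · rw [if_pos rfl]
        refine Finset.sum_congr rfl fun σ _ => Finset.sum_congr rfl fun τ _ => ?_
        rw [if_pos rfl]
      · rw [if_neg hki]
        unfold ddis
        refine Finset.sum_congr rfl fun σ _ => Finset.sum_congr rfl fun τ _ => ?_
        rw [if_neg hki]
    rw [Finset.sum_congr rfl hsplit]
    have hcard1 : (1 : ℕ) ≤ F.card := Finset.card_pos.mpr ⟨i, hi⟩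
    have herase : ∑ k ∈ F.erase i, (if k = i then (∑ σ : Fin n → Bool, ∑ τ : Fin n → Bool,
        pc σ τ * |hbp M θ i σ - hbp M θ i τ|) else ddis pc i)
        = ((F.card : ℝ) - 1) * ddis pc i := by
      rw [Finset.sum_congr rfl (fun k hk => if_neg (Finset.ne_of_mem_erase hk))]
      rw [Finset.sum_const, nsmul_eq_mul, Finset.card_erase_of_mem hi, Nat.cast_sub hcard1]
      push_cast
      ring
    rw [← Finset.sum_erase_add F _ hi, herase, if_pos rfl]
    ring
  have hbd : (∑ σ : Fin n → Bool, ∑ τ : Fin n → Bool, pc σ τ * |hbp M θ i σ - hbp M θ i τ|)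
      ≤ ∑ j, (b * (if M i j ≠ 0 then 1 else 0)) * ddis pc j := by
    have h1 : (∑ σ : Fin n → Bool, ∑ τ : Fin n → Bool, pc σ τ * |hbp M θ i σ - hbp M θ i τ|)
        ≤ ∑ σ : Fin n → Bool, ∑ τ : Fin n → Bool, pc σ τ *
          ∑ j, (b * (if M i j ≠ 0 then 1 else 0)) * (if σ j = τ j then 0 else 1) := by
      refine Finset.sum_le_sum fun σ _ => Finset.sum_le_sum fun τ _ => ?_
      exact mul_le_mul_of_nonneg_left (hbp_lip b M θ hbound i σ τ) (hpc σ τ)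
    refine h1.trans (le_of_eq ?_)
    calc (∑ σ : Fin n → Bool, ∑ τ : Fin n → Bool, pc σ τ *
          ∑ j, (b * (if M i j ≠ 0 then 1 else 0)) * (if σ j = τ j then 0 else 1))
        = ∑ σ : Fin n → Bool, ∑ τ : Fin n → Bool, ∑ j,
          (b * (if M i j ≠ 0 then 1 else 0)) * (pc σ τ * (if σ j = τ j then 0 else 1)) := by
          refine Finset.sum_congr rfl fun σ _ => Finset.sum_congr rfl fun τ _ => ?_
          rw [Finset.mul_sum]
          exact Finset.sum_congr rfl fun j _ => by ring
      _ = ∑ σ : Fin n → Bool, ∑ j, ∑ τ : Fin n → Bool,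
          (b * (if M i j ≠ 0 then 1 else 0)) * (pc σ τ * (if σ j = τ j then 0 else 1)) :=
          Finset.sum_congr rfl fun σ _ => Finset.sum_comm
      _ = ∑ j, ∑ σ : Fin n → Bool, ∑ τ : Fin n → Bool,
          (b * (if M i j ≠ 0 then 1 else 0)) * (pc σ τ * (if σ j = τ j then 0 else 1)) :=
          Finset.sum_comm
      _ = ∑ j, (b * (if M i j ≠ 0 then 1 else 0)) * ddis pc j := by
          refine Finset.sum_congr rfl fun j _ => ?_
          unfold ddis
          rw [Finset.mul_sum]
          exact Finset.sum_congr rfl fun σ _ => (Finset.mul_sum _ _ _).symm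
  rw [e4]
  have hfpos : 0 < f := by
    have h : 0 < F.card := Finset.card_pos.mpr ⟨i, hi⟩
    rw [hf]
    exact_mod_cast h
  have hfinv : 0 < f⁻¹ := inv_pos.mpr hfpos
  have expand : f⁻¹ * ((∑ σ : Fin n → Bool, ∑ τ : Fin n → Bool,
        pc σ τ * |hbp M θ i σ - hbp M θ i τ|) + (f - 1) * ddis pc i)
      ≤ f⁻¹ * ((∑ j, (b * (if M i j ≠ 0 then 1 else 0)) * ddis pc j) + (f - 1) * ddis pc i) := by
    refine mul_le_mul_of_nonneg_left (by linarith [hbd]) hfinv.le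
  refine expand.trans (le_of_eq ?_)
  field_simp
  ring

lemma pc_support_left {n : ℕ} (M : Matrix (Fin n) (Fin n) ℝ) (θ : Fin n → ℝ)
    (S : Finset (Fin n)) (x : Fin n → Bool) (u : Fin n)
    (pc : (Fin n → Bool) → (Fin n → Bool) → ℝ) (hpc : ∀ σ τ, 0 ≤ pc σ τ)
    (hL : ∀ σ, ∑ τ, pc σ τ = condμ M θ S x u true σ)
    (σ τ : Fin n → Bool) (hσ : ¬ ((∀ w ∈ S, σ w = x w) ∧ σ u = true)) : pc σ τ = 0 := by
  have h0 : ∑ τ', pc σ τ' = 0 := by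
    rw [hL σ, condμ_eq_zero M θ S x u true σ hσ]
  have := (Finset.sum_eq_zero_iff_of_nonneg (fun τ' _ => hpc σ τ')).mp h0
  exact this τ (Finset.mem_univ τ)

lemma pc_support_right {n : ℕ} (M : Matrix (Fin n) (Fin n) ℝ) (θ : Fin n → ℝ)
    (S : Finset (Fin n)) (x : Fin n → Bool) (u : Fin n)
    (pc : (Fin n → Bool) → (Fin n → Bool) → ℝ) (hpc : ∀ σ τ, 0 ≤ pc σ τ)
    (hR : ∀ τ, ∑ σ, pc σ τ = condμ M θ S x u false τ)
    (σ τ : Fin n → Bool) (hτ : ¬ ((∀ w ∈ S, τ w = x w) ∧ τ u = false)) : pc σ τ = 0 := by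
  have h0 : ∑ σ', pc σ' τ = 0 := by
    rw [hR τ, condμ_eq_zero M θ S x u false τ hτ]
  have := (Finset.sum_eq_zero_iff_of_nonneg (fun σ' _ => hpc σ' τ)).mp h0
  exact this σ (Finset.mem_univ σ)

lemma ddis_le_one {n : ℕ} (M : Matrix (Fin n) (Fin n) ℝ) (θ : Fin n → ℝ)
    (S : Finset (Fin n)) (x : Fin n → Bool) (u : Fin n) (hu : u ∉ S)
    (pc : (Fin n → Bool) → (Fin n → Bool) → ℝ) (hpc : ∀ σ τ, 0 ≤ pc σ τ)
    (hL : ∀ σ, ∑ τ, pc σ τ = condμ M θ S x u true σ) (i : Fin n) : ddis pc i ≤ 1 := by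
  have hmass : ∑ σ : Fin n → Bool, ∑ τ : Fin n → Bool, pc σ τ = 1 := by
    rw [Finset.sum_congr rfl fun σ (_ : σ ∈ Finset.univ) => hL σ]
    exact condμ_sum M θ S x u true hu
  calc ddis pc i ≤ ∑ σ : Fin n → Bool, ∑ τ : Fin n → Bool, pc σ τ := by
        refine Finset.sum_le_sum fun σ _ => Finset.sum_le_sum fun τ _ => ?_
        rcases le_or_gt (pc σ τ * (if σ i = τ i then 0 else 1)) (pc σ τ) with h | h
        · exact h
        · exfalso
          have : (if σ i = τ i then (0:ℝ) else 1) ≤ 1 := by split <;> norm_num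
          nlinarith [hpc σ τ]
    _ = 1 := hmass

lemma ddis_S_zero {n : ℕ} (M : Matrix (Fin n) (Fin n) ℝ) (θ : Fin n → ℝ)
    (S : Finset (Fin n)) (x : Fin n → Bool) (u : Fin n)
    (pc : (Fin n → Bool) → (Fin n → Bool) → ℝ) (hpc : ∀ σ τ, 0 ≤ pc σ τ)
    (hL : ∀ σ, ∑ τ, pc σ τ = condμ M θ S x u true σ)
    (hR : ∀ τ, ∑ σ, pc σ τ = condμ M θ S x u false τ)
    (j : Fin n) (hj : j ∈ S) : ddis pc j = 0 := by
  unfold ddis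
  refine Finset.sum_eq_zero fun σ _ => Finset.sum_eq_zero fun τ _ => ?_
  by_cases hσ : (∀ w ∈ S, σ w = x w) ∧ σ u = true
  · by_cases hτ : (∀ w ∈ S, τ w = x w) ∧ τ u = false
    · have : σ j = τ j := by rw [hσ.1 j hj, hτ.1 j hj]
      rw [if_pos this, mul_zero]
    · rw [pc_support_right M θ S x u pc hpc hR σ τ hτ, zero_mul]
  · rw [pc_support_left M θ S x u pc hpc hL σ τ hσ, zero_mul]

/-- a walk from `i` to `u` with intermediate vertices outside `S`. -/
def Walkable {n : ℕ} (M : Matrix (Fin n) (Fin n) ℝ) (S : Finset (Fin n)) (u : Fin n)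
    (i : Fin n) (k : ℕ) : Prop :=
  ∃ p : ℕ → Fin n, p 0 = i ∧ p k = u ∧ (∀ t < k, M (p t) (p (t + 1)) ≠ 0) ∧
    (∀ t, 0 < t → t < k → p t ∉ S)

/-- a self-avoiding path from `i` to `u` with intermediate vertices outside `S`. -/
def SAP {n : ℕ} (M : Matrix (Fin n) (Fin n) ℝ) (S : Finset (Fin n)) (u : Fin n)
    (i : Fin n) (k : ℕ) : Prop :=
  ∃ p : ℕ → Fin n, p 0 = i ∧ p k = u ∧ (∀ t < k, M (p t) (p (t + 1)) ≠ 0) ∧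
    (∀ t, 0 < t → t < k → p t ∉ S) ∧ (∀ s ≤ k, ∀ t ≤ k, p s = p t → s = t)

lemma walk_to_sap {n : ℕ} (M : Matrix (Fin n) (Fin n) ℝ) (S : Finset (Fin n)) (u : Fin n) :
    ∀ k (i : Fin n), Walkable M S u i k → ∃ k' ≤ k, SAP M S u i k' := by
  intro k
  induction k using Nat.strong_induction_on with
  | _ k ih =>
    intro i hw
    obtain ⟨p, h0, hk, hedge, hmid⟩ := hw
    by_cases hinj : ∀ s ≤ k, ∀ t ≤ k, p s = p t → s = t
    · exact ⟨k, le_refl k, p, h0, hk, hedge, hmid, hinj⟩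
    · push_neg at hinj
      obtain ⟨s0, hs0, t0, ht0, heq0, hne0⟩ := hinj
      obtain ⟨s, t, hs, ht, hst, heq⟩ : ∃ s t, s ≤ k ∧ t ≤ k ∧ s < t ∧ p s = p t := by
        rcases lt_or_gt_of_ne hne0 with h | h
        · exact ⟨s0, t0, hs0, ht0, h, heq0⟩
        · exact ⟨t0, s0, ht0, hs0, h, heq0.symm⟩
      have hδpos : 0 < t - s := Nat.sub_pos_of_lt hst
      have hk'lt : k - (t - s) < k := by omega
      have hwalk : Walkable M S u i (k - (t - s)) := by
        refine ⟨fun r => if r ≤ s then p r else p (r + (t - s)), ?_, ?_, ?_, ?_⟩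
        · show (if 0 ≤ s then p 0 else p (0 + (t - s))) = i
          rw [if_pos (Nat.zero_le s)]
          exact h0
        · show (if k - (t - s) ≤ s then p (k - (t - s)) else p (k - (t - s) + (t - s))) = u
          by_cases h : k - (t - s) ≤ s
          · rw [if_pos h]
            have hteqk : t = k := by omega
            have hseq : s = k - (t - s) := by omega
            rw [← hseq, heq, hteqk, hk]
          · rw [if_neg h, show k - (t - s) + (t - s) = k from by omega, hk]
        · intro r hr
          show M (if r ≤ s then p r else p (r + (t - s)))
              (if r + 1 ≤ s then p (r + 1) else p (r + 1 + (t - s))) ≠ 0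
          by_cases h1 : r + 1 ≤ s
          · rw [if_pos (by omega : r ≤ s), if_pos h1]
            exact hedge r (by omega)
          · by_cases h2 : r ≤ s
            · have hrs : r = s := by omega
              rw [if_pos h2, if_neg h1, hrs, heq, show s + 1 + (t - s) = t + 1 from by omega]
              exact hedge t (by omega)
            · rw [if_neg h2, if_neg h1, show r + 1 + (t - s) = r + (t - s) + 1 from by omega]
              exact hedge (r + (t - s)) (by omega)
        · intro r hr0 hrk
          show (if r ≤ s then p r else p (r + (t - s))) ∉ S
          by_cases h : r ≤ s
          · rw [if_pos h]
            exact hmid r hr0 (by omega)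
          · rw [if_neg h]
            exact hmid (r + (t - s)) (by omega) (by omega)
      obtain ⟨k'', hk'', hsap⟩ := ih (k - (t - s)) hk'lt i hwalk
      exact ⟨k'', le_trans hk'' (le_of_lt hk'lt), hsap⟩

/-- truncated graph distance from `i` to `u` avoiding `S`. -/
def pdist {n : ℕ} (M : Matrix (Fin n) (Fin n) ℝ) (S : Finset (Fin n)) (u : Fin n)
    (ℓ : ℕ) (i : Fin n) : ℕ :=
  if h : ∃ k, SAP M S u i k then min (Nat.find h) ℓ else ℓ

lemma pdist_u {n : ℕ} (M : Matrix (Fin n) (Fin n) ℝ) (S : Finset (Fin n)) (u : Fin n)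
    (ℓ : ℕ) : pdist M S u ℓ u = 0 := by
  have hsap : SAP M S u u 0 :=
    ⟨fun _ => u, rfl, rfl, fun t ht => absurd ht (Nat.not_lt_zero t),
      fun t ht0 htk => absurd (lt_trans ht0 htk) (lt_irrefl 0), fun s hs t ht _ => by omega⟩
  have h : ∃ k, SAP M S u u k := ⟨0, hsap⟩
  unfold pdist
  rw [dif_pos h]
  have : Nat.find h = 0 := Nat.le_zero.mp (Nat.find_le hsap)
  rw [this]
  exact Nat.zero_min ℓ

lemma pdist_pos {n : ℕ} (M : Matrix (Fin n) (Fin n) ℝ) (S : Finset (Fin n)) (u : Fin n)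
    (ℓ : ℕ) (hℓ : 1 ≤ ℓ) (i : Fin n) (hi : i ≠ u) : 1 ≤ pdist M S u ℓ i := by
  unfold pdist
  split
  · rename_i h
    have hfind : Nat.find h ≠ 0 := by
      intro h0
      obtain ⟨p, hp0, hpk, _, _, _⟩ := Nat.find_spec h
      rw [h0] at hpk
      exact hi (hp0 ▸ hpk ▸ rfl)
    omega
  · exact hℓ

lemma pdist_neighbor {n : ℕ} (M : Matrix (Fin n) (Fin n) ℝ) (S : Finset (Fin n)) (u : Fin n)
    (ℓ : ℕ) (i j : Fin n) (hjS : j ∉ S) (hedge : M i j ≠ 0) :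
    pdist M S u ℓ i ≤ pdist M S u ℓ j + 1 := by
  by_cases hj : ∃ k, SAP M S u j k
  · obtain ⟨p, hp0, hpk, hpe, hpm, hpinj⟩ := Nat.find_spec hj
    set kj := Nat.find hj with hkj
    have hwalk : Walkable M S u i (kj + 1) := by
      refine ⟨fun t => if t = 0 then i else p (t - 1), ?_, ?_, ?_, ?_⟩
      · show (if (0:ℕ) = 0 then i else p (0 - 1)) = i
        rw [if_pos rfl]
      · show (if kj + 1 = 0 then i else p (kj + 1 - 1)) = u
        rw [if_neg (by omega : ¬ kj + 1 = 0), show kj + 1 - 1 = kj from by omega, hpk]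
      · intro t ht
        show M (if t = 0 then i else p (t - 1)) (if t + 1 = 0 then i else p (t + 1 - 1)) ≠ 0
        rw [if_neg (by omega : ¬ t + 1 = 0), show t + 1 - 1 = t from by omega]
        by_cases h0 : t = 0
        · rw [if_pos h0, h0, hp0]
          exact hedge
        · rw [if_neg h0]
          have := hpe (t - 1) (by omega)
          rwa [show t - 1 + 1 = t from by omega] at this
      · intro t ht0 htk
        show (if t = 0 then i else p (t - 1)) ∉ S
        rw [if_neg (by omega : ¬ t = 0)]
        by_cases h1 : t - 1 = 0
        · rw [h1, hp0]
          exact hjS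
        · exact hpm (t - 1) (by omega) (by omega)
    obtain ⟨k', hk'le, hsap⟩ := walk_to_sap M S u (kj + 1) i hwalk
    have hi : ∃ k, SAP M S u i k := ⟨k', hsap⟩
    have hfind : Nat.find hi ≤ kj + 1 := le_trans (Nat.find_le hsap) hk'le
    unfold pdist
    rw [dif_pos hi, dif_pos hj, ← hkj]
    omega
  · unfold pdist
    rw [dif_neg hj]
    split
    · omega
    · omega

/-- the supersolution vector for the disagreement recursion. -/
def Evec {n : ℕ} (b : ℝ) (d : ℕ) (M : Matrix (Fin n) (Fin n) ℝ) (S : Finset (Fin n))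
    (u : Fin n) (ℓ : ℕ) (i : Fin n) : ℝ :=
  min 1 ((b * d) ^ (pdist M S u ℓ i) / (1 - b * d))

lemma Evec_nonneg {n : ℕ} (b : ℝ) (d : ℕ) (M : Matrix (Fin n) (Fin n) ℝ)
    (S : Finset (Fin n)) (u : Fin n) (ℓ : ℕ) (hb : 0 < b) (hbd : b * d < 1) (i : Fin n) :
    0 ≤ Evec b d M S u ℓ i := by
  unfold Evec
  have h1 : (0:ℝ) ≤ b * d := by positivity
  have h2 : (0:ℝ) < 1 - b * d := by linarith
  positivity

lemma Evec_le_one {n : ℕ} (b : ℝ) (d : ℕ) (M : Matrix (Fin n) (Fin n) ℝ)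
    (S : Finset (Fin n)) (u : Fin n) (ℓ : ℕ) (i : Fin n) : Evec b d M S u ℓ i ≤ 1 :=
  min_le_left _ _

lemma Evec_u {n : ℕ} (b : ℝ) (d : ℕ) (M : Matrix (Fin n) (Fin n) ℝ)
    (S : Finset (Fin n)) (u : Fin n) (ℓ : ℕ) (hb : 0 < b) (hbd : b * d < 1) :
    Evec b d M S u ℓ u = 1 := by
  unfold Evec
  rw [pdist_u, pow_zero]
  have h2 : (0:ℝ) < 1 - b * d := by linarith
  have h3 : (0:ℝ) ≤ b * d := by positivity
  rw [min_eq_left]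
  rw [le_div_iff₀ h2]
  linarith

/-- key supersolution inequality. -/
lemma Evec_super {n : ℕ} (b : ℝ) (d : ℕ) (M : Matrix (Fin n) (Fin n) ℝ)
    (S : Finset (Fin n)) (u : Fin n) (ℓ : ℕ) (hℓ : 1 ≤ ℓ) (hb : 0 < b) (hd : 0 < d)
    (hbd : b * d < 1)
    (hsparse : ∀ i, (Finset.univ.filter (fun j => M i j ≠ 0)).card ≤ d)
    (i : Fin n) (hiu : i ≠ u) :
    ∑ j, (b * (if M i j ≠ 0 then 1 else 0)) * (if j ∈ S then 0 else Evec b d M S u ℓ j)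
      ≤ Evec b d M S u ℓ i := by
  have hbd0 : (0:ℝ) ≤ b * d := by positivity
  have h1bd : (0:ℝ) < 1 - b * d := by linarith
  set m := pdist M S u ℓ i with hm
  have hm1 : 1 ≤ m := pdist_pos M S u ℓ hℓ i hiu
  set Q : ℝ := min 1 ((b * d) ^ (m - 1) / (1 - b * d)) with hQ
  have hQ0 : 0 ≤ Q := by
    rw [hQ]
    positivity
  have hterm : ∀ j, (b * (if M i j ≠ 0 then 1 else 0)) * (if j ∈ S then 0 else Evec b d M S u ℓ j)
      ≤ (if M i j ≠ 0 then 1 else 0) * (b * Q) := by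
    intro j
    by_cases hMij : M i j ≠ 0
    · rw [if_pos hMij]
      simp only [mul_one, one_mul]
      by_cases hjS : j ∈ S
      · rw [if_pos hjS, mul_zero]
        positivity
      · rw [if_neg hjS]
        refine mul_le_mul_of_nonneg_left ?_ hb.le
        have hnb : m ≤ pdist M S u ℓ j + 1 := pdist_neighbor M S u ℓ i j hjS hMij
        unfold Evec
        rw [hQ]
        refine min_le_min (le_refl 1) ?_
        refine (div_le_div_iff_of_pos_right h1bd).mpr ?_
        exact pow_le_pow_of_le_one hbd0 (by linarith : b * d ≤ 1) (by omega)
    · rw [if_neg hMij]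
      simp
  calc (∑ j, (b * (if M i j ≠ 0 then 1 else 0)) * (if j ∈ S then 0 else Evec b d M S u ℓ j))
      ≤ ∑ j, (if M i j ≠ 0 then 1 else 0) * (b * Q) := Finset.sum_le_sum fun j _ => hterm j
    _ = ((Finset.univ.filter (fun j => M i j ≠ 0)).card : ℝ) * (b * Q) := by
        rw [← Finset.sum_mul, Finset.sum_boole]
    _ ≤ (d : ℝ) * (b * Q) := by
        refine mul_le_mul_of_nonneg_right ?_ (by positivity)
        exact_mod_cast hsparse i
    _ = (b * d) * Q := by ring
    _ ≤ Evec b d M S u ℓ i := by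
        unfold Evec
        rw [hQ, ← hm]
        have hpow : (b * d) * ((b * d) ^ (m - 1) / (1 - b * d)) = (b * d) ^ m / (1 - b * d) := by
          rw [mul_div_assoc', ← pow_succ']
          congr 2
          omega
        refine le_min ?_ ?_
        · calc (b * d) * min 1 ((b * d) ^ (m - 1) / (1 - b * d))
              ≤ (b * d) * 1 := mul_le_mul_of_nonneg_left (min_le_left _ _) hbd0
            _ ≤ 1 := by linarith
        · calc (b * d) * min 1 ((b * d) ^ (m - 1) / (1 - b * d))
              ≤ (b * d) * ((b * d) ^ (m - 1) / (1 - b * d)) :=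
                mul_le_mul_of_nonneg_left (min_le_right _ _) hbd0
            _ = (b * d) ^ m / (1 - b * d) := hpow

def cseq {n : ℕ} (M : Matrix (Fin n) (Fin n) ℝ) (θ : Fin n → ℝ) (S : Finset (Fin n))
    (x : Fin n → Bool) (u : Fin n) (F : Finset (Fin n)) :
    ℕ → (Fin n → Bool) → (Fin n → Bool) → ℝ
  | 0 => fun σ τ => condμ M θ S x u true σ * condμ M θ S x u false τ
  | (t+1) => cstep M θ F (cseq M θ S x u F t)

lemma cseq_props {n : ℕ} (M : Matrix (Fin n) (Fin n) ℝ) (θ : Fin n → ℝ)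
    (hsymm : M.IsSymm) (hdiag : ∀ i, M i i = 0) (S : Finset (Fin n))
    (x : Fin n → Bool) (u : Fin n) (hu : u ∉ S) (F : Finset (Fin n))
    (hfree : ∀ i ∈ F, i ∉ S ∧ i ≠ u) (hcard : (F.card : ℝ) ≠ 0) (t : ℕ) :
    (∀ σ τ, 0 ≤ cseq M θ S x u F t σ τ) ∧
    (∀ σ, ∑ τ, cseq M θ S x u F t σ τ = condμ M θ S x u true σ) ∧
    (∀ τ, ∑ σ, cseq M θ S x u F t σ τ = condμ M θ S x u false τ) := by
  induction t with
  | zero =>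
    refine ⟨fun σ τ => mul_nonneg (condμ_nonneg M θ S x u true hu σ)
      (condμ_nonneg M θ S x u false hu τ), fun σ => ?_, fun τ => ?_⟩
    · rw [show (cseq M θ S x u F 0) = fun σ τ => condμ M θ S x u true σ *
        condμ M θ S x u false τ from rfl]
      rw [← Finset.mul_sum, condμ_sum M θ S x u false hu, mul_one]
    · rw [show (cseq M θ S x u F 0) = fun σ τ => condμ M θ S x u true σ *
        condμ M θ S x u false τ from rfl]
      rw [← Finset.sum_mul, condμ_sum M θ S x u true hu, one_mul]
  | succ t ih =>
    obtain ⟨h0, hL, hR⟩ := ih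
    refine ⟨cstep_nonneg M θ F _ h0,
      cstep_left_marginal M θ hsymm hdiag S x u hu F hfree hcard _ hL,
      cstep_right_marginal M θ hsymm hdiag S x u hu F hfree hcard _ hR⟩

/-- the decay estimate by induction on time. -/
lemma cseq_decay {n : ℕ} (b : ℝ) (d : ℕ) (M : Matrix (Fin n) (Fin n) ℝ) (θ : Fin n → ℝ)
    (hsymm : M.IsSymm) (hdiag : ∀ i, M i i = 0)
    (hb : 0 < b) (hd : 0 < d) (hbd : b * d < 1)
    (hbound : ∀ i j, |M i j| ≤ b)
    (hsparse : ∀ i, (Finset.univ.filter (fun j => M i j ≠ 0)).card ≤ d)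
    (S : Finset (Fin n)) (x : Fin n → Bool) (u : Fin n) (hu : u ∉ S)
    (ℓ : ℕ) (hℓ : 1 ≤ ℓ) (F : Finset (Fin n))
    (hF : F = Finset.univ.filter (fun i => i ∉ S ∧ i ≠ u)) (hFne : F.Nonempty) (t : ℕ) :
    ∀ i ∈ F, ddis (cseq M θ S x u F t) i
      ≤ Evec b d M S u ℓ i + (1 - (F.card : ℝ)⁻¹ * (1 - b * d)) ^ t := by
  have hfree : ∀ i ∈ F, i ∉ S ∧ i ≠ u := by
    intro i hi
    rw [hF] at hi
    exact (Finset.mem_filter.mp hi).2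
  have hfpos : (0:ℝ) < (F.card : ℝ) := by exact_mod_cast Finset.card_pos.mpr hFne
  have hcard : (F.card : ℝ) ≠ 0 := hfpos.ne'
  have hbd0 : (0:ℝ) ≤ b * d := by positivity
  have h1bd : (0:ℝ) < 1 - b * d := by linarith
  have hfinv : (0:ℝ) < (F.card : ℝ)⁻¹ := inv_pos.mpr hfpos
  have hfinv1 : (F.card : ℝ)⁻¹ ≤ 1 := by
    rw [inv_le_one_iff₀]
    right
    exact_mod_cast Finset.card_pos.mpr hFne
  set η : ℝ := 1 - (F.card : ℝ)⁻¹ * (1 - b * d) with hη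
  have hη0 : 0 ≤ η := by
    rw [hη]
    nlinarith
  induction t with
  | zero =>
    intro i hi
    obtain ⟨h0, hL, hR⟩ := cseq_props M θ hsymm hdiag S x u hu F hfree hcard 0
    rw [pow_zero]
    have := ddis_le_one M θ S x u hu _ h0 hL i
    have := Evec_nonneg b d M S u ℓ hb hbd i
    linarith
  | succ t ih =>
    intro i hi
    obtain ⟨h0, hL, hR⟩ := cseq_props M θ hsymm hdiag S x u hu F hfree hcard t
    have hstep := ddis_step b M θ hbound F hcard (cseq M θ S x u F t) h0 i hi
    have hsum : (∑ j, (b * (if M i j ≠ 0 then 1 else 0)) * ddis (cseq M θ S x u F t) j)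
        ≤ Evec b d M S u ℓ i + η ^ t * (b * d) := by
      have hterm : ∀ j, (b * (if M i j ≠ 0 then 1 else 0)) * ddis (cseq M θ S x u F t) j
          ≤ (b * (if M i j ≠ 0 then 1 else 0)) * ((if j ∈ S then 0 else Evec b d M S u ℓ j)
            + η ^ t) := by
        intro j
        have hc0 : (0:ℝ) ≤ b * (if M i j ≠ 0 then 1 else 0) := by
          split <;> positivity
        refine mul_le_mul_of_nonneg_left ?_ hc0
        by_cases hjS : j ∈ S
        · rw [if_pos hjS, ddis_S_zero M θ S x u _ h0 hL hR j hjS, zero_add]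
          positivity
        · rw [if_neg hjS]
          by_cases hju : j = u
          · rw [hju, Evec_u b d M S u ℓ hb hbd]
            have h1 := ddis_le_one M θ S x u hu _ h0 hL u
            have hηt : (0:ℝ) ≤ η ^ t := by positivity
            linarith
          · have hjF : j ∈ F := by
              rw [hF]
              exact Finset.mem_filter.mpr ⟨Finset.mem_univ j, hjS, hju⟩
            exact ih j hjF
      calc (∑ j, (b * (if M i j ≠ 0 then 1 else 0)) * ddis (cseq M θ S x u F t) j)
          ≤ ∑ j, (b * (if M i j ≠ 0 then 1 else 0)) *
            ((if j ∈ S then 0 else Evec b d M S u ℓ j) + η ^ t) :=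
            Finset.sum_le_sum fun j _ => hterm j
        _ = (∑ j, (b * (if M i j ≠ 0 then 1 else 0)) *
              (if j ∈ S then 0 else Evec b d M S u ℓ j))
            + (∑ j, (b * (if M i j ≠ 0 then 1 else 0))) * η ^ t := by
            have hexp : ∀ j : Fin n, (b * (if M i j ≠ 0 then 1 else 0)) *
                ((if j ∈ S then 0 else Evec b d M S u ℓ j) + η ^ t)
                = (b * (if M i j ≠ 0 then 1 else 0)) *
                  (if j ∈ S then 0 else Evec b d M S u ℓ j)
                  + (b * (if M i j ≠ 0 then 1 else 0)) * η ^ t := fun j => by ring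
            rw [Finset.sum_congr rfl fun j (_ : j ∈ Finset.univ) => hexp j,
              Finset.sum_add_distrib, Finset.sum_mul]
        _ ≤ Evec b d M S u ℓ i + η ^ t * (b * d) := by
            have hs1 := Evec_super b d M S u ℓ hℓ hb hd hbd hsparse i (hfree i hi).2
            have hs2 : (∑ j, (b * (if M i j ≠ 0 then 1 else 0))) ≤ b * d := by
              calc (∑ j, (b * (if M i j ≠ 0 then 1 else 0)))
                  = b * ((Finset.univ.filter (fun j => M i j ≠ 0)).card : ℝ) := by
                    rw [← Finset.mul_sum, Finset.sum_boole]
                _ ≤ b * d := by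
                    refine mul_le_mul_of_nonneg_left ?_ hb.le
                    exact_mod_cast hsparse i
            have hηt : (0:ℝ) ≤ η ^ t := by positivity
            nlinarith
    have hEi1 : Evec b d M S u ℓ i ≤ 1 := Evec_le_one b d M S u ℓ i
    have hIH : ddis (cseq M θ S x u F t) i ≤ Evec b d M S u ℓ i + η ^ t := ih i hi
    have hfinal : (1 - (F.card : ℝ)⁻¹) * (Evec b d M S u ℓ i + η ^ t)
        + (F.card : ℝ)⁻¹ * (Evec b d M S u ℓ i + η ^ t * (b * d))
        = Evec b d M S u ℓ i + η ^ (t + 1) := by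
      rw [pow_succ, hη]
      ring
    have h1f : (0:ℝ) ≤ 1 - (F.card : ℝ)⁻¹ := by linarith
    calc ddis (cseq M θ S x u F (t + 1)) i
        ≤ (1 - (F.card : ℝ)⁻¹) * ddis (cseq M θ S x u F t) i
          + (F.card : ℝ)⁻¹ * ∑ j, (b * (if M i j ≠ 0 then 1 else 0)) *
            ddis (cseq M θ S x u F t) j := hstep
      _ ≤ (1 - (F.card : ℝ)⁻¹) * (Evec b d M S u ℓ i + η ^ t)
          + (F.card : ℝ)⁻¹ * (Evec b d M S u ℓ i + η ^ t * (b * d)) := by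
          refine add_le_add (mul_le_mul_of_nonneg_left hIH h1f)
            (mul_le_mul_of_nonneg_left hsum hfinv.le)
      _ = Evec b d M S u ℓ i + η ^ (t + 1) := hfinal

lemma marg_diff_le {n : ℕ} (M : Matrix (Fin n) (Fin n) ℝ) (θ : Fin n → ℝ)
    (S : Finset (Fin n)) (x : Fin n → Bool) (u : Fin n)
    (pc : (Fin n → Bool) → (Fin n → Bool) → ℝ) (hpc : ∀ σ τ, 0 ≤ pc σ τ)
    (hL : ∀ σ, ∑ τ, pc σ τ = condμ M θ S x u true σ)
    (hR : ∀ τ, ∑ σ, pc σ τ = condμ M θ S x u false τ) (v : Fin n) :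
    |(∑ σ, (if σ v = true then condμ M θ S x u true σ else 0))
      - (∑ τ, (if τ v = true then condμ M θ S x u false τ else 0))| ≤ ddis pc v := by
  have e1 : (∑ σ, (if σ v = true then condμ M θ S x u true σ else 0))
      = ∑ σ : Fin n → Bool, ∑ τ : Fin n → Bool, pc σ τ * (if σ v = true then 1 else 0) := by
    refine Finset.sum_congr rfl fun σ _ => ?_
    rw [← Finset.sum_mul, hL σ]
    by_cases h : σ v = true
    · rw [if_pos h, if_pos h, mul_one]
    · rw [if_neg h, if_neg h, mul_zero]
  have e2 : (∑ τ, (if τ v = true then condμ M θ S x u false τ else 0))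
      = ∑ σ : Fin n → Bool, ∑ τ : Fin n → Bool, pc σ τ * (if τ v = true then 1 else 0) := by
    rw [Finset.sum_comm]
    refine Finset.sum_congr rfl fun τ _ => ?_
    rw [← Finset.sum_mul, hR τ]
    by_cases h : τ v = true
    · rw [if_pos h, if_pos h, mul_one]
    · rw [if_neg h, if_neg h, mul_zero]
  rw [e1, e2, ← Finset.sum_sub_distrib]
  rw [Finset.sum_congr rfl fun σ (_ : σ ∈ Finset.univ) => (Finset.sum_sub_distrib ..).symm]
  refine (Finset.abs_sum_le_sum_abs _ _).trans ?_
  unfold ddis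
  refine Finset.sum_le_sum fun σ _ => ?_
  refine (Finset.abs_sum_le_sum_abs _ _).trans ?_
  refine Finset.sum_le_sum fun τ _ => ?_
  rw [show pc σ τ * (if σ v = true then (1:ℝ) else 0) - pc σ τ * (if τ v = true then 1 else 0)
    = pc σ τ * ((if σ v = true then (1:ℝ) else 0) - (if τ v = true then 1 else 0)) from by ring]
  rw [abs_mul, abs_of_nonneg (hpc σ τ)]
  refine mul_le_mul_of_nonneg_left ?_ (hpc σ τ)
  by_cases h : σ v = τ v
  · rw [if_pos h, h]
    simp
  · rw [if_neg h]
    cases hσv : σ v <;> cases hτv : τ v <;> simp_all <;> norm_num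

lemma ite_div_zero (P : Prop) [Decidable P] (a c : ℝ) :
    (if P then a / c else 0) = (if P then a else 0) / c := by
  split
  · rfl
  · rw [zero_div]

lemma isingCond_eq {n : ℕ} (M : Matrix (Fin n) (Fin n) ℝ) (θ : Fin n → ℝ)
    (S : Finset (Fin n)) (x : Fin n → Bool) (u : Fin n) (hu : u ∉ S) (s : Bool) (v : Fin n) :
    (isingPr M θ (fun σ => (σ v = true) ∧ ((∀ w ∈ S, σ w = x w) ∧ σ u = s)))
      / (isingPr M θ (fun σ => (∀ w ∈ S, σ w = x w) ∧ σ u = s))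
    = ∑ σ, (if σ v = true then condμ M θ S x u s σ else 0) := by
  have hZ : (0:ℝ) < ∑ τ : Fin n → Bool, isingWt M θ τ :=
    Finset.sum_pos (fun τ _ => isingWt_pos M θ τ) Finset.univ_nonempty
  have hD : isingPr M θ (fun σ => (∀ w ∈ S, σ w = x w) ∧ σ u = s)
      = condZ M θ S x u s / (∑ τ : Fin n → Bool, isingWt M θ τ) := by
    unfold isingPr isingProb
    rw [← Finset.sum_div]
    congr 1
    rw [Finset.sum_filter]
    unfold condZ condWt
    refine Finset.sum_congr rfl fun σ _ => ?_
    by_cases h : (∀ w ∈ S, σ w = x w) ∧ σ u = s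
    · rw [if_pos h, if_pos h]
    · rw [if_neg h, if_neg h]
  have hN : isingPr M θ (fun σ => (σ v = true) ∧ ((∀ w ∈ S, σ w = x w) ∧ σ u = s))
      = (∑ σ, (if σ v = true then condWt M θ S x u s σ else 0))
        / (∑ τ : Fin n → Bool, isingWt M θ τ) := by
    unfold isingPr isingProb
    rw [← Finset.sum_div]
    congr 1
    rw [Finset.sum_filter]
    refine Finset.sum_congr rfl fun σ _ => ?_
    unfold condWt
    by_cases h1 : σ v = true
    · by_cases h2 : (∀ w ∈ S, σ w = x w) ∧ σ u = s
      · rw [if_pos ⟨h1, h2⟩, if_pos h1, if_pos h2]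
      · rw [if_neg (fun h => h2 h.2), if_pos h1, if_neg h2]
    · rw [if_neg (fun h => h1 h.1), if_neg h1]
  rw [hN, hD]
  have hcz := condZ_pos M θ S x u s hu
  have e : ((∑ σ, (if σ v = true then condWt M θ S x u s σ else 0))
        / (∑ τ : Fin n → Bool, isingWt M θ τ))
      / (condZ M θ S x u s / (∑ τ : Fin n → Bool, isingWt M θ τ))
      = (∑ σ, (if σ v = true then condWt M θ S x u s σ else 0)) / condZ M θ S x u s := by
    rw [div_div_div_comm, div_self hZ.ne', div_one]
  rw [e, Finset.sum_div]
  refine Finset.sum_congr rfl fun σ _ => ?_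
  by_cases h : σ v = true
  · rw [if_pos h, if_pos h]
    rfl
  · rw [if_neg h, if_neg h, zero_div]

lemma pdist_v {n : ℕ} (M : Matrix (Fin n) (Fin n) ℝ) (S : Finset (Fin n)) (u v : Fin n)
    (ℓ : ℕ)
    (hdist : ∀ (k : ℕ) (p : ℕ → Fin n), p 0 = v → p k = u →
      (∀ i < k, M (p i) (p (i + 1)) ≠ 0) →
      (∀ i, 0 < i → i < k → p i ∉ S) →
      (∀ i ≤ k, ∀ j ≤ k, p i = p j → i = j) → ℓ ≤ k) :
    pdist M S u ℓ v = ℓ := by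
  unfold pdist
  split
  · rename_i h
    obtain ⟨p, hp0, hpk, hpe, hpm, hpinj⟩ := Nat.find_spec h
    have hle : ℓ ≤ Nat.find h := hdist (Nat.find h) p hp0 hpk hpe hpm hpinj
    omega
  · rfl

/-- If every path from `v` to `u` whose intermediate vertices lie outside `S`
has length at least `ℓ`, then the conditional influence of `u` on `v` given `X_S` is at most
`(bd)^ℓ/(1-bd)`. -/
theorem stmt4 {n : ℕ} (b : ℝ) (d : ℕ) (hb : 0 < b) (hd : 0 < d) (hn : 0 < n)
    (hbd : b * d < 1)
    (M : Matrix (Fin n) (Fin n) ℝ) (θ : Fin n → ℝ)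
    (hsymm : M.IsSymm) (hdiag : ∀ i, M i i = 0)
    (hbound : ∀ i j, |M i j| ≤ b)
    (hsparse : ∀ i, (Finset.univ.filter (fun j => M i j ≠ 0)).card ≤ d)
    (S : Finset (Fin n)) (x : Fin n → Bool) (v u : Fin n)
    (hvu : v ≠ u) (hv : v ∉ S) (hu : u ∉ S)
    (ℓ : ℕ) (hℓ : 1 ≤ ℓ)
    (hdist : ∀ (k : ℕ) (p : ℕ → Fin n), p 0 = v → p k = u →
      (∀ i < k, M (p i) (p (i + 1)) ≠ 0) →
      (∀ i, 0 < i → i < k → p i ∉ S) →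
      (∀ i ≤ k, ∀ j ≤ k, p i = p j → i = j) → ℓ ≤ k) :
    |isingCond M θ (fun σ => σ v = true)
        (fun σ => (∀ w ∈ S, σ w = x w) ∧ σ u = true) -
      isingCond M θ (fun σ => σ v = true)
        (fun σ => (∀ w ∈ S, σ w = x w) ∧ σ u = false)|
      ≤ (b * d) ^ ℓ / (1 - b * d) := by
  classical
  have e1 : isingCond M θ (fun σ => σ v = true)
      (fun σ => (∀ w ∈ S, σ w = x w) ∧ σ u = true)
      = ∑ σ, (if σ v = true then condμ M θ S x u true σ else 0) :=
    isingCond_eq M θ S x u hu true v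
  have e2 : isingCond M θ (fun σ => σ v = true)
      (fun σ => (∀ w ∈ S, σ w = x w) ∧ σ u = false)
      = ∑ σ, (if σ v = true then condμ M θ S x u false σ else 0) :=
    isingCond_eq M θ S x u hu false v
  rw [e1, e2]
  set F : Finset (Fin n) := Finset.univ.filter (fun i => i ∉ S ∧ i ≠ u) with hF
  have hvF : v ∈ F := by
    rw [hF]
    exact Finset.mem_filter.mpr ⟨Finset.mem_univ v, hv, hvu⟩
  have hFne : F.Nonempty := ⟨v, hvF⟩
  have hfree : ∀ i ∈ F, i ∉ S ∧ i ≠ u := by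
    intro i hi
    rw [hF] at hi
    exact (Finset.mem_filter.mp hi).2
  have hfpos : (0:ℝ) < (F.card : ℝ) := by exact_mod_cast Finset.card_pos.mpr hFne
  have hcard : (F.card : ℝ) ≠ 0 := hfpos.ne'
  have hbd0 : (0:ℝ) ≤ b * d := by positivity
  have h1bd : (0:ℝ) < 1 - b * d := by linarith
  set η : ℝ := 1 - (F.card : ℝ)⁻¹ * (1 - b * d) with hη
  have hfinv : (0:ℝ) < (F.card : ℝ)⁻¹ := inv_pos.mpr hfpos
  have hfinv1 : (F.card : ℝ)⁻¹ ≤ 1 := by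
    rw [inv_le_one_iff₀]
    right
    exact_mod_cast Finset.card_pos.mpr hFne
  have hη0 : 0 ≤ η := by
    rw [hη]
    nlinarith
  have hη1 : η < 1 := by
    rw [hη]
    nlinarith
  have hbt : ∀ t : ℕ, |(∑ σ, (if σ v = true then condμ M θ S x u true σ else 0))
      - (∑ σ, (if σ v = true then condμ M θ S x u false σ else 0))|
      ≤ Evec b d M S u ℓ v + η ^ t := by
    intro t
    obtain ⟨h0, hL, hR⟩ := cseq_props M θ hsymm hdiag S x u hu F hfree hcard t
    refine (marg_diff_le M θ S x u _ h0 hL hR v).trans ?_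
    exact cseq_decay b d M θ hsymm hdiag hb hd hbd hbound hsparse S x u hu ℓ hℓ F hF
      hFne t v hvF
  have htend : Filter.Tendsto (fun t : ℕ => Evec b d M S u ℓ v + η ^ t)
      Filter.atTop (nhds (Evec b d M S u ℓ v)) := by
    have h1 := tendsto_pow_atTop_nhds_zero_of_lt_one hη0 hη1
    have h2 := (tendsto_const_nhds (x := Evec b d M S u ℓ v)
      (f := Filter.atTop (α := ℕ))).add h1
    simpa using h2
  have hfin : |(∑ σ, (if σ v = true then condμ M θ S x u true σ else 0))
      - (∑ σ, (if σ v = true then condμ M θ S x u false σ else 0))|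
      ≤ Evec b d M S u ℓ v :=
    ge_of_tendsto htend (Filter.Eventually.of_forall hbt)
  refine hfin.trans ?_
  unfold Evec
  rw [pdist_v M S u v ℓ hdist]
  exact min_le_right _ _
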